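/- arXiv:2605.19502 — 9 statements merged into one kernel-verified Lean document; each statement's English description precedes it below -/
import Mathlib

section
/- Let p be an odd prime and let q(X) = X^2 + aX + b be irreducible over F_p with roots λ, μ in F_{p^2}. For 1 ≤ m ≤ p-1, the sum over x in F_p^× of x^m/q(x) equals -(λ^m + μ^m)/(a^2 - 4b). -/
open Polynomial Finset

section helpers

variable {p : ℕ} [Fact p.Prime] {K : Type*} [Field K] [CharP K p]

private lemma prodXsubC_zmod :
    ∏ x : ZMod p, (X - C x) = (X ^ p - X : (ZMod p)[X]) := by
  have hp1 : 1 < p := (Fact.out : p.Prime).one_lt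
  have hcard : Fintype.card (ZMod p) = p := ZMod.card p
  have hroots := FiniteField.roots_X_pow_card_sub_X (ZMod p)
  rw [hcard] at hroots
  have hmonic : (X ^ p - X : (ZMod p)[X]).Monic := by
    refine (monic_X_pow p).sub_of_left ?_
    rw [degree_X, degree_X_pow]
    exact_mod_cast hp1
  have hdeg := FiniteField.X_pow_card_sub_X_natDegree_eq (ZMod p) hp1
  have h := prod_multiset_X_sub_C_of_monic_of_roots_card_eq hmonic
    (by rw [hroots, hdeg]; simpa using hcard)
  rw [hroots] at h
  rw [Finset.prod_eq_multiset_prod]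
  exact h

variable (A : ZMod p →+* K)

private lemma prod_c_sub (c : K) : ∏ x : ZMod p, (c - A x) = c ^ p - c := by
  have h := congrArg (eval₂ A c) (prodXsubC_zmod (p := p))
  simpa [eval₂_finset_prod] using h

private lemma prodK : ∏ x : ZMod p, (X - C (A x)) = (X ^ p - X : K[X]) := by
  have h := congrArg (Polynomial.mapRingHom A) (prodXsubC_zmod (p := p))
  simpa using h

private lemma sum_prod_erase (c : K) :
    ∑ x : ZMod p, ∏ y ∈ univ.erase x, (c - A y) = -1 := by
  classical
  have hder : derivative (∏ x : ZMod p, (X - C (A x))) = (-1 : K[X]) := by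
    rw [prodK A, derivative_sub, derivative_X_pow, derivative_X]
    simp [CharP.cast_eq_zero K p]
  have hder2 : derivative (∏ x : ZMod p, (X - C (A x)))
      = ∑ x : ZMod p, ∏ y ∈ univ.erase x, (X - C (A y)) := by
    rw [Finset.prod_eq_multiset_prod, derivative_prod]
    rw [Finset.sum_eq_multiset_sum]
    congr 1
    apply Multiset.map_congr rfl
    intro i _
    rw [← Finset.erase_val, ← Finset.prod_eq_multiset_prod]
    simp
  have h := congrArg (eval c) (hder2.symm.trans hder)
  simpa [eval_finset_sum, eval_prod] using h

private lemma sum_inv_c_sub (c : K) (hc : ∀ x : ZMod p, A x ≠ c) :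
    ∑ x : ZMod p, (c - A x)⁻¹ = -(c ^ p - c)⁻¹ := by
  classical
  have h0 : ∀ x : ZMod p, c - A x ≠ 0 := fun x => sub_ne_zero.2 fun h => hc x h.symm
  have hP : c ^ p - c ≠ 0 := by
    rw [← prod_c_sub A c]
    exact Finset.prod_ne_zero_iff.2 fun x _ => h0 x
  have key : ∑ x : ZMod p, (c - A x)⁻¹
      = (∑ x : ZMod p, ∏ y ∈ univ.erase x, (c - A y)) / ∏ x : ZMod p, (c - A x) := by
    rw [Finset.sum_div]
    refine Finset.sum_congr rfl fun x _ => ?_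
    have he : ∏ y ∈ univ.erase x, (c - A y) ≠ 0 :=
      Finset.prod_ne_zero_iff.2 fun y _ => h0 y
    rw [← Finset.mul_prod_erase univ _ (mem_univ x)]
    rw [eq_div_iff (mul_ne_zero (h0 x) he)]
    exact inv_mul_cancel_left₀ (h0 x) _
  rw [key, sum_prod_erase A, prod_c_sub A, neg_div, one_div]

private lemma sum_A_pow (i : ℕ) (hi : i < p - 1) : ∑ x : ZMod p, (A x) ^ i = 0 := by
  have h : ∑ x : ZMod p, x ^ i = 0 := by
    have := FiniteField.sum_pow_lt_card_sub_one (K := ZMod p) i (by rwa [ZMod.card p])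
    exact this
  calc ∑ x : ZMod p, (A x) ^ i = A (∑ x : ZMod p, x ^ i) := by
        rw [map_sum]; exact Finset.sum_congr rfl fun x _ => (map_pow A x i).symm
    _ = 0 := by rw [h, map_zero]

private lemma S_formula (c : K) (hc : ∀ x : ZMod p, A x ≠ c)
    (m : ℕ) (hm2 : m ≤ p - 1) :
    ∑ x : ZMod p, (A x) ^ m / (A x - c) = c ^ m * (c ^ p - c)⁻¹ := by
  classical
  have h0 : ∀ x : ZMod p, A x - c ≠ 0 := fun x => sub_ne_zero.2 (hc x)
  have hterm : ∀ x : ZMod p, (A x) ^ m / (A x - c)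
      = (∑ i ∈ Finset.range m, (A x) ^ i * c ^ (m - 1 - i)) + c ^ m / (A x - c) := by
    intro x
    have key := geom_sum₂_mul (A x) c m
    have h1 : (A x) ^ m / (A x - c) = ((A x) ^ m - c ^ m) / (A x - c) + c ^ m / (A x - c) := by
      rw [← add_div, sub_add_cancel]
    rw [h1, ← key, mul_div_cancel_right₀ _ (h0 x)]
  rw [Finset.sum_congr rfl fun x _ => hterm x, Finset.sum_add_distrib]
  have hgeom : ∑ x : ZMod p, ∑ i ∈ Finset.range m, (A x) ^ i * c ^ (m - 1 - i) = 0 := by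
    rw [Finset.sum_comm]
    refine Finset.sum_eq_zero fun i hi => ?_
    rw [← Finset.sum_mul, sum_A_pow A i (lt_of_lt_of_le (Finset.mem_range.1 hi) hm2), zero_mul]
  rw [hgeom, zero_add]
  have : ∑ x : ZMod p, c ^ m / (A x - c) = c ^ m * ∑ x : ZMod p, (A x - c)⁻¹ := by
    rw [Finset.mul_sum]
    exact Finset.sum_congr rfl fun x _ => div_eq_mul_inv _ _
  rw [this]
  have hinv : ∑ x : ZMod p, (A x - c)⁻¹ = (c ^ p - c)⁻¹ := by
    have := sum_inv_c_sub A c hc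
    have h2 : ∑ x : ZMod p, (A x - c)⁻¹ = -∑ x : ZMod p, (c - A x)⁻¹ := by
      rw [← Finset.sum_neg_distrib]
      exact Finset.sum_congr rfl fun x _ => by rw [← inv_neg, neg_sub]
    rw [h2, this, neg_neg]
  rw [hinv]

end helpers

/-- If `q(X)=X²+aX+b` is irreducible over `𝔽_p` with roots `λ, μ` in a quadratic extension,
then for `1 ≤ m ≤ p-1`, `∑_{x ∈ 𝔽_p^×} x^m/q(x) = -(λ^m+μ^m)/(a²-4b)`. -/
theorem stmt2 (p : ℕ) [Fact p.Prime] (hodd : p ≠ 2) (a b : ZMod p)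
    (K : Type*) [Field K] [CharP K p]
    (hirr : ∀ x : ZMod p, x ^ 2 + a * x + b ≠ 0)
    (lam mu : K)
    (hlam : lam ^ 2 + ZMod.castHom (dvd_refl p) K a * lam + ZMod.castHom (dvd_refl p) K b = 0)
    (hmu : mu ^ 2 + ZMod.castHom (dvd_refl p) K a * mu + ZMod.castHom (dvd_refl p) K b = 0)
    (hne : lam ≠ mu)
    (m : ℕ) (hm1 : 1 ≤ m) (hm2 : m ≤ p - 1) :
    ∑ x : (ZMod p)ˣ,
        (ZMod.castHom (dvd_refl p) K (x : ZMod p)) ^ m /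
          ((ZMod.castHom (dvd_refl p) K (x : ZMod p)) ^ 2 +
            ZMod.castHom (dvd_refl p) K a * ZMod.castHom (dvd_refl p) K (x : ZMod p) +
            ZMod.castHom (dvd_refl p) K b)
      = -(lam ^ m + mu ^ m) / ZMod.castHom (dvd_refl p) K (a ^ 2 - 4 * b) := by
  classical
  set A : ZMod p →+* K := ZMod.castHom (dvd_refl p) K with hA
  -- roots are not in the image of A
  have hroots_ne : ∀ c : K, c ^ 2 + A a * c + A b = 0 → ∀ x : ZMod p, A x ≠ c := by
    intro c hcroot x hx
    apply hirr x
    apply A.injective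
    rw [map_add, map_add, map_mul, map_pow, map_zero, hx, hcroot]
  have hclam := hroots_ne lam hlam
  have hcmu := hroots_ne mu hmu
  -- Vieta
  have hlm : lam - mu ≠ 0 := sub_ne_zero.2 hne
  have hsum : lam + mu + A a = 0 := by
    have h := sub_eq_zero.2 (hlam.trans hmu.symm)
    have h2 : (lam - mu) * (lam + mu + A a) = 0 := by linear_combination h
    rcases mul_eq_zero.1 h2 with h3 | h3
    · exact absurd h3 hlm
    · exact h3
  have hprod : lam * mu = A b := by linear_combination lam * hsum - hlam
  have factor : ∀ z : K, z ^ 2 + A a * z + A b = (z - lam) * (z - mu) := by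
    intro z
    linear_combination z * hsum - hprod
  -- Frobenius: lam ^ p = mu
  have hfixA : ∀ x : ZMod p, (A x) ^ p = A x := by
    intro x
    rw [← map_pow, ZMod.pow_card]
  have hnotfix : ∀ c : K, (∀ x : ZMod p, A x ≠ c) → c ^ p ≠ c := by
    intro c hc hfix
    have hprod0 : ∏ x : ZMod p, (c - A x) = 0 := by
      rw [prod_c_sub A c, hfix, sub_self]
    obtain ⟨x, -, hx⟩ := Finset.prod_eq_zero_iff.1 hprod0
    exact hc x (by rw [← sub_eq_zero, ← neg_sub, hx, neg_zero])
  have hfrob : ∀ c : K, c ^ 2 + A a * c + A b = 0 →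
      (c ^ p) ^ 2 + A a * c ^ p + A b = 0 := by
    intro c hc
    have h := congrArg (fun z : K => z ^ p) hc
    simp only [zero_pow ((Fact.out : p.Prime).ne_zero)] at h
    calc (c ^ p) ^ 2 + A a * c ^ p + A b
        = (c ^ 2) ^ p + (A a * c) ^ p + (A b) ^ p := by
          rw [← pow_mul, ← pow_mul, mul_comm 2 p, mul_pow, hfixA a, hfixA b]
      _ = (c ^ 2 + A a * c + A b) ^ p := by
          rw [add_pow_char, add_pow_char]
      _ = 0 := h
  have hlamp : lam ^ p = mu := by
    have h := hfrob lam hlam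
    rw [factor] at h
    rcases mul_eq_zero.1 h with h2 | h2
    · exact absurd (sub_eq_zero.1 h2) (hnotfix lam hclam)
    · exact sub_eq_zero.1 h2
  have hmup : mu ^ p = lam := by
    have h := hfrob mu hmu
    rw [factor] at h
    rcases mul_eq_zero.1 h with h2 | h2
    · exact sub_eq_zero.1 h2
    · exact absurd (sub_eq_zero.1 h2) (hnotfix mu hcmu)
  -- convert the sum over units to a sum over ZMod p
  set F : ZMod p → K := fun x =>
    (A x) ^ m / ((A x) ^ 2 + A a * A x + A b) with hF
  have hunits : ∑ x : (ZMod p)ˣ, F (x : ZMod p) = ∑ x : ZMod p, F x := by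
    have himg : ∑ x ∈ (univ : Finset (ZMod p)ˣ).image (fun u : (ZMod p)ˣ => (u : ZMod p)), F x
        = ∑ u : (ZMod p)ˣ, F (u : ZMod p) :=
      Finset.sum_image (fun x _ y _ h => Units.ext h)
    rw [← himg]
    apply Finset.sum_subset (Finset.subset_univ _)
    intro x _ hx
    have hx0 : x = 0 := by
      by_contra h
      exact hx (Finset.mem_image.2 ⟨Units.mk0 x h, Finset.mem_univ _, rfl⟩)
    rw [hF, hx0]
    simp only [map_zero, zero_pow (Nat.one_le_iff_ne_zero.1 hm1), zero_div]
  -- evaluate each term via partial fractions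
  have hdenne : ∀ x : ZMod p, A x - lam ≠ 0 := fun x => sub_ne_zero.2 (hclam x)
  have hdenne' : ∀ x : ZMod p, A x - mu ≠ 0 := fun x => sub_ne_zero.2 (hcmu x)
  have hterm : ∀ x : ZMod p, F x =
      ((A x) ^ m / (A x - lam) - (A x) ^ m / (A x - mu)) * (lam - mu)⁻¹ := by
    intro x
    rw [hF]
    simp only
    rw [factor (A x)]
    have hD : (A x - lam) * (A x - mu) ≠ 0 := mul_ne_zero (hdenne x) (hdenne' x)
    rw [div_sub_div _ _ (hdenne x) (hdenne' x), eq_mul_inv_iff_mul_eq₀ hlm,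
      div_mul_eq_mul_div, div_eq_div_iff hD hD]
    ring
  have hsplit : ∑ x : ZMod p, F x =
      ((∑ x : ZMod p, (A x) ^ m / (A x - lam)) - ∑ x : ZMod p, (A x) ^ m / (A x - mu))
        * (lam - mu)⁻¹ := by
    rw [Finset.sum_congr rfl fun x _ => hterm x, ← Finset.sum_mul, Finset.sum_sub_distrib]
  have hS1 := S_formula A lam hclam m hm2
  have hS2 := S_formula A mu hcmu m hm2
  rw [hunits, hsplit, hS1, hS2, hlamp, hmup]
  -- final algebraic computation
  have hdisc : A (a ^ 2 - 4 * b) = (lam - mu) ^ 2 := by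
    rw [map_sub, map_mul, map_pow]
    have h4 : A 4 = 4 := by rw [map_ofNat]
    rw [h4]
    linear_combination (A a - lam - mu) * hsum + 4 * hprod
  rw [hdisc]
  have hml : mu - lam ≠ 0 := sub_ne_zero.2 (Ne.symm hne)
  have h2 : (lam - mu) ^ 2 ≠ 0 := pow_ne_zero 2 hlm
  rw [eq_div_iff h2]
  have e1 : (mu - lam)⁻¹ = -(lam - mu)⁻¹ := by rw [← neg_sub lam mu, inv_neg]
  have e2 : (lam - mu)⁻¹ * (lam - mu) = 1 := inv_mul_cancel₀ hlm
  rw [e1]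
  linear_combination (-(lam ^ m + mu ^ m) * ((lam - mu)⁻¹ * (lam - mu) + 1)) * e2
end

section
/- Let p be an odd prime, q(X)=X^2+aX+b irreducible over F_p with roots λ,μ in F_{p^2}, and R = λ/μ. If the multiplicative order of R is even, then the product over m = 1,...,p-1 of (λ^m + μ^m) is zero; hence det[(i^2+aij+bj^2)^{p-2}]_{1≤i,j≤p-1} ≡ 0 (mod p). -/
open Finset in
private lemma stmt4_frob_fixed (p : ℕ) [Fact p.Prime] (K : Type*) [Field K] [CharP K p]
    (x : K) (hx : x ^ p = x) : ∃ c : ZMod p, ZMod.castHom (dvd_refl p) K c = x := by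
  classical
  set φ := ZMod.castHom (dvd_refl p) K with hφ
  by_contra hcon
  push_neg at hcon
  have hp1 : 1 < p := (Fact.out : p.Prime).one_lt
  have hinj : Function.Injective φ := φ.injective
  set f : Polynomial K := Polynomial.X ^ p - Polynomial.X with hf
  have hfne : f ≠ 0 := FiniteField.X_pow_card_sub_X_ne_zero K hp1
  have hdeg : f.natDegree = p := FiniteField.X_pow_card_sub_X_natDegree_eq K hp1
  set T : Finset K := Finset.univ.image φ with hT
  have hTcard : T.card = p := by
    rw [hT, Finset.card_image_of_injective _ hinj, Finset.card_univ, ZMod.card]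
  have hsub : insert x T ⊆ f.roots.toFinset := by
    intro y hy
    rw [Multiset.mem_toFinset, Polynomial.mem_roots hfne]
    have hyroot : y ^ p = y := by
      rcases Finset.mem_insert.mp hy with rfl | hyT
      · exact hx
      · obtain ⟨c, _, rfl⟩ := Finset.mem_image.mp hyT
        rw [← map_pow, ZMod.pow_card]
    simp [hf, Polynomial.IsRoot, hyroot]
  have hxT : x ∉ T := by
    intro hxT
    obtain ⟨c, _, hc⟩ := Finset.mem_image.mp hxT
    exact hcon c hc
  have hcard : p + 1 ≤ f.roots.toFinset.card := by
    have := Finset.card_le_card hsub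
    rwa [Finset.card_insert_of_notMem hxT, hTcard] at this
  have : f.roots.toFinset.card ≤ p := by
    calc f.roots.toFinset.card ≤ Multiset.card f.roots := Multiset.toFinset_card_le _
    _ ≤ f.natDegree := Polynomial.card_roots' f
    _ = p := hdeg
  omega

open Finset in
private lemma stmt4_sum_pow (p : ℕ) [Fact p.Prime] (K : Type*) [Field K] [CharP K p] (s : ℕ) :
    ∑ j : (ZMod p)ˣ, (ZMod.castHom (dvd_refl p) K (j : ZMod p)) ^ s
      = if (p - 1) ∣ s then (-1 : K) else 0 := by
  classical
  set φ := ZMod.castHom (dvd_refl p) K with hφ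
  have h := FiniteField.sum_pow_units (ZMod p) s
  rw [ZMod.card] at h
  calc ∑ j : (ZMod p)ˣ, (φ (j : ZMod p)) ^ s
      = φ (∑ j : (ZMod p)ˣ, ((j : ZMod p)) ^ s) := by rw [map_sum]; simp [map_pow]
    _ = φ (if (p - 1) ∣ s then (-1 : ZMod p) else 0) := by rw [h]
    _ = if (p - 1) ∣ s then (-1 : K) else 0 := by split_ifs <;> simp

/-- With `q(X)=X²+aX+b` irreducible over `𝔽_p`, roots `λ, μ`, `R = λ/μ`:
if the multiplicative order of `R` is even, then `∏_{m=1}^{p-1}(λ^m+μ^m) = 0`,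
hence `det[(i²+aij+bj²)^{p-2}] ≡ 0 (mod p)`. -/
theorem stmt4 (p : ℕ) [Fact p.Prime] (hodd : p ≠ 2) (a b : ZMod p) (hb : b ≠ 0)
    (K : Type*) [Field K] [CharP K p]
    (hirr : ∀ x : ZMod p, x ^ 2 + a * x + b ≠ 0)
    (lam mu : K)
    (hlam : lam ^ 2 + ZMod.castHom (dvd_refl p) K a * lam + ZMod.castHom (dvd_refl p) K b = 0)
    (hmu : mu ^ 2 + ZMod.castHom (dvd_refl p) K a * mu + ZMod.castHom (dvd_refl p) K b = 0)
    (hne : lam ≠ mu)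
    (heven : Even (orderOf (lam / mu))) :
    (∏ m ∈ Finset.Icc 1 (p - 1), (lam ^ m + mu ^ m)) = 0 ∧
      Matrix.det (Matrix.of fun i j : (ZMod p)ˣ =>
          ((i : ZMod p) ^ 2 + a * (i : ZMod p) * (j : ZMod p) + b * (j : ZMod p) ^ 2) ^ (p - 2))
        = 0 := by
  classical
  have hp3 : 3 ≤ p := by
    have := (Fact.out : p.Prime).two_le
    omega
  set φ := ZMod.castHom (dvd_refl p) K with hφ
  set A := φ a with hA
  set B := φ b with hBdef
  have hinj : Function.Injective φ := φ.injective
  have hB : B ≠ 0 := by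
    intro h
    apply hb; apply hinj
    rw [map_zero, ← hBdef]; exact h
  -- Vieta
  have hsum : lam + mu = -A := by
    have hd : lam - mu ≠ 0 := sub_ne_zero.mpr hne
    have h0 : (lam - mu) * (lam + mu + A) = 0 := by linear_combination hlam - hmu
    rcases mul_eq_zero.mp h0 with h | h
    · exact absurd h hd
    · linear_combination h
  have hprod : lam * mu = B := by linear_combination lam * hsum - hlam
  have hlam0 : lam ≠ 0 := by
    intro h; apply hB; rw [← hprod, h, zero_mul]
  have hmu0 : mu ≠ 0 := by
    intro h; apply hB; rw [← hprod, h, mul_zero]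
  have hroots : ∀ x : K, x ^ 2 + A * x + B = 0 → x = lam ∨ x = mu := by
    intro x hx
    have h0 : (x - lam) * (x - mu) = 0 := by linear_combination hx - x * hsum + hprod
    rcases mul_eq_zero.mp h0 with h | h
    · exact Or.inl (sub_eq_zero.mp h)
    · exact Or.inr (sub_eq_zero.mp h)
  have hFroot : ∀ c : ZMod p, (φ c) ^ 2 + A * (φ c) + B ≠ 0 := by
    intro c h
    apply hirr c
    apply hinj
    rw [map_add, map_add, map_pow, map_mul, map_zero]
    exact h
  have hnotim : ∀ x : K, x ^ p = x → x ^ 2 + A * x + B ≠ 0 := by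
    intro x hx hroot
    obtain ⟨c, rfl⟩ := stmt4_frob_fixed p K x hx
    exact hFroot c hroot
  have hApow : A ^ p = A := by rw [hA, ← map_pow, ZMod.pow_card]
  have hBpow : B ^ p = B := by rw [hBdef, ← map_pow, ZMod.pow_card]
  have hfrobroot : ∀ x : K, x ^ 2 + A * x + B = 0 → (x ^ p) ^ 2 + A * (x ^ p) + B = 0 := by
    intro x hx
    have : (x ^ 2 + A * x + B) ^ p = (x ^ p) ^ 2 + A * (x ^ p) + B := by
      rw [add_pow_char, add_pow_char, mul_pow, hApow, hBpow, pow_right_comm]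
    rw [← this, hx, zero_pow (by omega : p ≠ 0)]
  have hfrob_lam : lam ^ p = mu := by
    rcases hroots _ (hfrobroot lam hlam) with h | h
    · exact absurd hlam (hnotim lam h)
    · exact h
  have hfrob_mu : mu ^ p = lam := by
    rcases hroots _ (hfrobroot mu hmu) with h | h
    · exact h
    · exact absurd hmu (hnotim mu h)
  set R := lam / mu with hR
  have hRpow : R ^ (p + 1) = 1 := by
    rw [hR, div_pow, pow_succ, pow_succ, hfrob_lam, hfrob_mu]
    rw [div_eq_one_iff_eq (by exact mul_ne_zero hlam0 hmu0)]
    ring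
  have hfin : IsOfFinOrder R := isOfFinOrder_iff_pow_eq_one.mpr ⟨p + 1, by omega, hRpow⟩
  have hHpos : 0 < orderOf R := hfin.orderOf_pos
  have hHdvd : orderOf R ∣ p + 1 := orderOf_dvd_of_pow_eq_one hRpow
  obtain ⟨k, hk⟩ := heven
  have hkpos : 1 ≤ k := by omega
  have hRk2 : R ^ (k + k) = 1 := by rw [← hk]; exact pow_orderOf_eq_one R
  have hRkne : R ^ k ≠ 1 := by
    intro h
    have := Nat.le_of_dvd hkpos (orderOf_dvd_of_pow_eq_one h)
    omega
  have hRk : R ^ k = -1 := by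
    have h0 : (R ^ k - 1) * (R ^ k + 1) = 0 := by
      have : R ^ k * R ^ k = 1 := by rw [← pow_add]; exact hRk2
      linear_combination this
    rcases mul_eq_zero.mp h0 with h | h
    · exact absurd (by linear_combination h) hRkne
    · linear_combination h
  have hkey : lam ^ k + mu ^ k = 0 := by
    have hmuk : mu ^ k ≠ 0 := pow_ne_zero _ hmu0
    have : lam ^ k / mu ^ k = -1 := by rw [← div_pow]; exact hRk
    rw [div_eq_iff hmuk] at this
    linear_combination this
  have hklep : k ≤ p - 1 := by
    have : k + k ≤ p + 1 := Nat.le_of_dvd (by omega) (hk ▸ hHdvd)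
    omega
  constructor
  · exact Finset.prod_eq_zero (Finset.mem_Icc.mpr ⟨hkpos, hklep⟩) hkey
  -- Part 2
  obtain ⟨k', rfl⟩ : ∃ k', k = k' + 1 := ⟨k - 1, by omega⟩
  set n := p - 1 with hn
  set t' := p - (k' + 1) with ht'
  -- basic unit facts
  have hJn : ∀ j : (ZMod p)ˣ, (φ (j : ZMod p)) ^ n = 1 := by
    intro j
    rw [← map_pow, ZMod.pow_card_sub_one_eq_one (j.ne_zero), map_one]
  have hJ0 : ∀ j : (ZMod p)ˣ, φ (j : ZMod p) ≠ 0 := by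
    intro j h
    exact j.ne_zero (hinj (by rw [h, map_zero]))
  -- frobenius relations in exponent n
  have hlamn : lam ^ n * lam = mu := by
    rw [← pow_succ, hn]
    have : p - 1 + 1 = p := by omega
    rw [this, hfrob_lam]
  have hmun : mu ^ n * mu = lam := by
    rw [← pow_succ, hn]
    have : p - 1 + 1 = p := by omega
    rw [this, hfrob_mu]
  have h1lam : (1 : K) - lam ^ n ≠ 0 := by
    intro h
    have hl : lam ^ n = 1 := by linear_combination -h
    apply hne
    rw [← hlamn, hl, one_mul]
  have h1mu : (1 : K) - mu ^ n ≠ 0 := by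
    intro h
    have hl : mu ^ n = 1 := by linear_combination -h
    apply hne
    rw [← hmun, hl, one_mul]
  have hlm : lam - mu ≠ 0 := sub_ne_zero.mpr hne
  -- the cancellation identity
  have hC : (1 - lam ^ n)⁻¹ * lam ^ k' = (1 - mu ^ n)⁻¹ * mu ^ k' := by
    rw [inv_mul_eq_div, inv_mul_eq_div, div_eq_div_iff h1lam h1mu]
    apply mul_left_cancel₀ (mul_ne_zero hlam0 hmu0)
    linear_combination (mu - lam) * hkey - lam ^ (k' + 1) * hmun + mu ^ (k' + 1) * hlamn
  -- geometric sums
  have hgs : ∀ (i j : (ZMod p)ˣ) (ν : K),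
      (∑ m ∈ Finset.range n, (φ (i : ZMod p)) ^ m * (ν * φ (j : ZMod p)) ^ (n - 1 - m))
        * (φ (i : ZMod p) - ν * φ (j : ZMod p)) = 1 - ν ^ n := by
    intro i j ν
    rw [geom_sum₂_mul, hJn i, mul_pow, hJn j, mul_one]
  have hfactne : ∀ (i j : (ZMod p)ˣ) (ν : K), (1 : K) - ν ^ n ≠ 0 →
      φ (i : ZMod p) - ν * φ (j : ZMod p) ≠ 0 := by
    intro i j ν hν h
    apply hν
    rw [← hgs i j ν, h, mul_zero]
  have hinvgs : ∀ (i j : (ZMod p)ˣ) (ν : K) (hν : (1 : K) - ν ^ n ≠ 0),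
      (φ (i : ZMod p) - ν * φ (j : ZMod p))⁻¹
        = (1 - ν ^ n)⁻¹ * ∑ m ∈ Finset.range n,
            (φ (i : ZMod p)) ^ m * (ν * φ (j : ZMod p)) ^ (n - 1 - m) := by
    intro i j ν hν
    apply inv_eq_of_mul_eq_one_right
    rw [mul_comm ((1 - ν ^ n)⁻¹) _, ← mul_assoc, mul_comm (φ (i : ZMod p) - ν * φ (j : ZMod p)) _,
      hgs i j ν, mul_inv_cancel₀ hν]
  -- the matrix over K
  set M : Matrix (ZMod p)ˣ (ZMod p)ˣ (ZMod p) := Matrix.of fun i j : (ZMod p)ˣ =>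
      ((i : ZMod p) ^ 2 + a * (i : ZMod p) * (j : ZMod p) + b * (j : ZMod p) ^ 2) ^ (p - 2)
    with hM
  set Q : (ZMod p)ˣ → (ZMod p)ˣ → K := fun i j =>
      (φ (i : ZMod p) - lam * φ (j : ZMod p)) * (φ (i : ZMod p) - mu * φ (j : ZMod p)) with hQ
  have hQne : ∀ i j, Q i j ≠ 0 := fun i j =>
    mul_ne_zero (hfactne i j lam h1lam) (hfactne i j mu h1mu)
  have hsp : ∀ s : ℕ, ∑ j : (ZMod p)ˣ, (φ (j : ZMod p)) ^ s
      = if (p - 1) ∣ s then (-1 : K) else 0 := fun s => stmt4_sum_pow p K s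
  have hentry : ∀ i j, φ (M i j) = (Q i j)⁻¹ := by
    intro i j
    have hQc : φ ((i : ZMod p) ^ 2 + a * (i : ZMod p) * (j : ZMod p) + b * (j : ZMod p) ^ 2)
        = Q i j := by
      simp only [map_add, map_mul, map_pow]
      show _ = (φ (i : ZMod p) - lam * φ (j : ZMod p)) * (φ (i : ZMod p) - mu * φ (j : ZMod p))
      linear_combination (φ (i : ZMod p) * φ (j : ZMod p)) * hsum - (φ (j : ZMod p)) ^ 2 * hprod
    have hMij : φ (M i j) = (Q i j) ^ (p - 2) := by
      show φ (((i : ZMod p) ^ 2 + a * (i : ZMod p) * (j : ZMod p) + b * (j : ZMod p) ^ 2) ^ (p - 2))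
        = _
      rw [map_pow, hQc]
    have hQzne : ((i : ZMod p) ^ 2 + a * (i : ZMod p) * (j : ZMod p) + b * (j : ZMod p) ^ 2) ≠ 0 := by
      intro h
      apply hQne i j
      rw [← hQc, h, map_zero]
    have hQ1 : (Q i j) ^ (p - 1) = 1 := by
      rw [← hQc, ← map_pow, ZMod.pow_card_sub_one_eq_one hQzne, map_one]
    rw [hMij]
    apply eq_inv_of_mul_eq_one_left
    rw [← pow_succ]
    have : p - 2 + 1 = p - 1 := by omega
    rw [this, hQ1]
  -- the kernel vector
  set v : (ZMod p)ˣ → K := fun j => (φ (j : ZMod p)) ^ (t' + 1) with hv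
  have hvne : v ≠ 0 := by
    intro h
    have h1 := congrFun h 1
    rw [hv] at h1
    simp at h1
  -- row sums vanish
  have hrow : ∀ i, ∑ j, (Q i j)⁻¹ * v j = 0 := by
    intro i
    set I := φ (i : ZMod p) with hI
    -- per-entry expansion
    have hE : ∀ j : (ZMod p)ˣ, (Q i j)⁻¹ * v j
        = (lam - mu)⁻¹ *
            ((((1 - lam ^ n)⁻¹ * ∑ m ∈ Finset.range n, I ^ m * (lam * φ (j : ZMod p)) ^ (n - 1 - m))
              - ((1 - mu ^ n)⁻¹ * ∑ m ∈ Finset.range n, I ^ m * (mu * φ (j : ZMod p)) ^ (n - 1 - m)))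
            * (φ (j : ZMod p)) ^ t') := by
      intro j
      set J := φ (j : ZMod p) with hJ
      have hLne : I - lam * J ≠ 0 := hfactne i j lam h1lam
      have hMne : I - mu * J ≠ 0 := hfactne i j mu h1mu
      have hpf : (Q i j)⁻¹ * v j
          = (lam - mu)⁻¹ * (((I - lam * J)⁻¹ - (I - mu * J)⁻¹) * J ^ t') := by
        show ((I - lam * J) * (I - mu * J))⁻¹ * J ^ (t' + 1) = _
        rw [inv_sub_inv hLne hMne, div_eq_mul_inv]
        linear_combination (-(J * ((I - lam * J) * (I - mu * J))⁻¹ * J ^ t')) * inv_mul_cancel₀ hlm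
      rw [hpf, hinvgs i j lam h1lam, hinvgs i j mu h1mu]
    rw [Finset.sum_congr rfl (fun j _ => hE j), ← Finset.mul_sum]
    -- compute S ν := ∑_j (∑_m I^m (ν J)^(n-1-m)) * J^t'
    have hS : ∀ ν : K,
        (∑ j : (ZMod p)ˣ, (∑ m ∈ Finset.range n, I ^ m * (ν * φ (j : ZMod p)) ^ (n - 1 - m))
            * (φ (j : ZMod p)) ^ t')
          = -(I ^ (n - (k' + 1)) * ν ^ k') := by
      intro ν
      have step1 : ∀ j : (ZMod p)ˣ,
          (∑ m ∈ Finset.range n, I ^ m * (ν * φ (j : ZMod p)) ^ (n - 1 - m))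
              * (φ (j : ZMod p)) ^ t'
            = ∑ m ∈ Finset.range n,
                (I ^ m * ν ^ (n - 1 - m)) * (φ (j : ZMod p)) ^ ((n - 1 - m) + t') := by
        intro j
        rw [Finset.sum_mul]
        apply Finset.sum_congr rfl
        intro m _
        rw [mul_pow, pow_add]
        ring
      rw [Finset.sum_congr rfl (fun j _ => step1 j), Finset.sum_comm]
      have step2 : ∀ m ∈ Finset.range n,
          (∑ j : (ZMod p)ˣ, (I ^ m * ν ^ (n - 1 - m)) * (φ (j : ZMod p)) ^ ((n - 1 - m) + t'))
            = (I ^ m * ν ^ (n - 1 - m)) * (if m = n - (k' + 1) then (-1 : K) else 0) := by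
        intro m hm
        rw [Finset.mem_range] at hm
        rw [← Finset.mul_sum, hsp _]
        congr 1
        have hiff : (p - 1) ∣ ((n - 1 - m) + t') ↔ m = n - (k' + 1) := by
          constructor
          · intro hdvd
            have hx0 : (n - 1 - m) + t' ≠ 0 := by omega
            have hx2 : (n - 1 - m) + t' < 2 * (p - 1) := by omega
            have := Nat.eq_of_dvd_of_lt_two_mul hx0 hdvd hx2
            omega
          · intro h
            refine ⟨1, ?_⟩
            omega
        simp only [hiff]
      rw [Finset.sum_congr rfl step2]
      have hmem : n - (k' + 1) ∈ Finset.range n := by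
        rw [Finset.mem_range]; omega
      rw [Finset.sum_eq_single_of_mem (n - (k' + 1)) hmem
        (fun m _ hmne => by rw [if_neg hmne, mul_zero]), if_pos rfl]
      have : n - 1 - (n - (k' + 1)) = k' := by omega
      rw [this]
      ring
    have hinner : (∑ j : (ZMod p)ˣ,
        ((((1 - lam ^ n)⁻¹ * ∑ m ∈ Finset.range n, I ^ m * (lam * φ (j : ZMod p)) ^ (n - 1 - m))
            - ((1 - mu ^ n)⁻¹ * ∑ m ∈ Finset.range n, I ^ m * (mu * φ (j : ZMod p)) ^ (n - 1 - m)))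
          * (φ (j : ZMod p)) ^ t'))
        = (1 - lam ^ n)⁻¹ * -(I ^ (n - (k' + 1)) * lam ^ k')
            - (1 - mu ^ n)⁻¹ * -(I ^ (n - (k' + 1)) * mu ^ k') := by
      rw [← hS lam, ← hS mu, Finset.mul_sum, Finset.mul_sum, ← Finset.sum_sub_distrib]
      apply Finset.sum_congr rfl
      intro j _
      ring
    rw [hinner]
    linear_combination (-((lam - mu)⁻¹ * I ^ (n - (k' + 1)))) * hC
  -- conclude det = 0
  have hdetK : (φ.mapMatrix M).det = 0 := by
    rw [← Matrix.exists_mulVec_eq_zero_iff]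
    refine ⟨v, hvne, ?_⟩
    funext i
    simp only [Matrix.mulVec, dotProduct, RingHom.mapMatrix_apply, Matrix.map_apply,
      Pi.zero_apply]
    rw [← hrow i]
    exact Finset.sum_congr rfl fun j _ => by rw [hentry i j]
  have : φ M.det = 0 := by rw [RingHom.map_det]; exact hdetK
  have : M.det = 0 := hinj (by rw [this, map_zero])
  exact this
end

section
/- Let p ≡ 5 (mod 24) be prime and let λ, μ be the roots of X^2+6X+6 over F_p (irreducible) in F_{p^2}. Then the multiplicative order of R = λ/μ is odd. -/
open Polynomial

private lemma aux32_stmt7 : ¬ IsSquare (2 : ZMod 3) := by decide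

/-- In a field of characteristic `p`, an element fixed by Frobenius lies in the prime field. -/
lemma exists_zmod_cast_of_pow_card {p : ℕ} [Fact p.Prime] {K : Type*} [Field K] [CharP K p]
    {y : K} (hy : y ^ p = y) : ∃ a : ZMod p, (ZMod.castHom (dvd_refl p) K) a = y := by
  classical
  by_contra hcon
  push_neg at hcon
  set φ := ZMod.castHom (dvd_refl p) K with hφ
  have h1p : 1 < p := (Fact.out : p.Prime).one_lt
  set f : K[X] := X ^ p - X with hfdef
  have hdeg : f.natDegree = p := by
    rw [hfdef, Polynomial.natDegree_sub_eq_left_of_natDegree_lt] <;>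
      simp [Polynomial.natDegree_X_pow, h1p]
  have hf0 : f ≠ 0 := by
    intro h
    rw [h] at hdeg
    simp at hdeg
    omega
  set Z : Finset K := insert y (Finset.univ.image φ) with hZ
  have hyZ : y ∉ Finset.univ.image φ := by
    simp only [Finset.mem_image, Finset.mem_univ, true_and]
    rintro ⟨a, ha⟩
    exact hcon a ha
  have hcard : Z.card = p + 1 := by
    rw [hZ, Finset.card_insert_of_notMem hyZ,
      Finset.card_image_of_injective _ φ.injective]
    simp [ZMod.card]
  have hsub : Z.val ⊆ f.roots := by
    intro z hz
    rw [Finset.mem_val] at hz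
    rw [Polynomial.mem_roots hf0]
    rw [hZ, Finset.mem_insert] at hz
    rcases hz with rfl | hz
    · simp [Polynomial.IsRoot, hfdef, hy]
    · simp only [Finset.mem_image, Finset.mem_univ, true_and] at hz
      obtain ⟨a, rfl⟩ := hz
      simp [Polynomial.IsRoot, hfdef, ← map_pow, ZMod.pow_card]
  have := Polynomial.card_le_degree_of_subset_roots hsub
  rw [hcard, hdeg] at this
  omega

/-- For `p ≡ 5 (mod 24)`, the roots `λ, μ` of `X²+6X+6` in `𝔽_{p²}` have `λ/μ` of odd
multiplicative order. -/
theorem stmt7 (p : ℕ) [Fact p.Prime] (hp : p % 24 = 5)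
    (K : Type*) [Field K] [CharP K p]
    (lam mu : K)
    (hlam : lam ^ 2 + 6 * lam + 6 = 0) (hmu : mu ^ 2 + 6 * mu + 6 = 0)
    (hne : lam ≠ mu) :
    Odd (orderOf (lam / mu)) := by
  haveI : Fact (Nat.Prime 3) := ⟨by norm_num⟩
  have hppr : p.Prime := Fact.out
  -- basic congruences
  have hp4 : p % 4 = 1 := by omega
  have hp3 : p % 3 = 2 := by omega
  have hp8 : p % 8 = 5 := by omega
  have hp2 : p ≠ 2 := by omega
  -- 6 ≠ 0 in char p
  have hp6 : ¬ (p ∣ 6) := by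
    intro h
    have := Nat.le_of_dvd (by norm_num) h
    interval_cases p <;> omega
  have h6K : (6 : K) ≠ 0 := by
    intro h
    exact hp6 ((CharP.cast_eq_zero_iff K p 6).mp (by exact_mod_cast h))
  -- 3 is not a square mod p
  have h3 : ¬ IsSquare (3 : ZMod p) := by
    have : ((3 : ℕ) : ZMod p) = (3 : ZMod p) := by norm_num
    rw [← this, ZMod.exists_sq_eq_prime_iff_of_mod_four_eq_one (q := 3) hp4 (by norm_num)]
    have hpc : ((p : ℕ) : ZMod 3) = 2 := by
      rw [← ZMod.natCast_mod, hp3]; rfl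
    rw [hpc]; exact aux32_stmt7
  -- 2 is not a square mod p
  have h2 : ¬ IsSquare (2 : ZMod p) := by
    rw [ZMod.exists_sq_eq_two_iff hp2]
    omega
  -- hence 6 is a square mod p
  have h6 : IsSquare (6 : ZMod p) := by
    have h60 : (6 : ZMod p) ≠ 0 := by
      intro h
      exact hp6 ((ZMod.natCast_eq_zero_iff 6 p).mp (by exact_mod_cast h))
    have hχ : quadraticChar (ZMod p) 6 = 1 := by
      have : (6 : ZMod p) = 2 * 3 := by norm_num
      rw [this, map_mul, quadraticChar_neg_one_iff_not_isSquare.mpr h2,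
        quadraticChar_neg_one_iff_not_isSquare.mpr h3]
      norm_num
    exact (quadraticChar_one_iff_isSquare h60).mp hχ
  obtain ⟨s, hs⟩ := h6
  set φ := ZMod.castHom (dvd_refl p) K with hφ
  set S : K := φ s with hSdef
  have hS2 : S ^ 2 = 6 := by
    rw [hSdef, ← map_pow]
    have : s ^ 2 = (6 : ZMod p) := by rw [hs]; ring
    rw [this]
    exact map_ofNat φ 6
  have hSne : S ≠ 0 := by
    intro h
    rw [h] at hS2
    exact h6K (by rw [← hS2]; ring)
  -- sum and product of roots
  have hsum : lam + mu + 6 = 0 := by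
    have key : (lam - mu) * (lam + mu + 6) = 0 := by linear_combination hlam - hmu
    rcases mul_eq_zero.mp key with h | h
    · exact absurd (sub_eq_zero.mp h) hne
    · exact h
  have hprod : lam * mu = 6 := by linear_combination lam * hsum - hlam
  have hmune : mu ≠ 0 := by
    intro h
    apply h6K
    linear_combination hmu - h * mu - 6 * h
  have hlamne : lam ≠ 0 := by
    intro h
    apply h6K
    linear_combination hlam - h * lam - 6 * h
  -- Frobenius sends lam to mu
  have hfrob : lam ^ p = mu := by
    have hroot : (lam ^ p) ^ 2 + 6 * lam ^ p + 6 = 0 := by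
      have := congrArg (frobenius K p) hlam
      simpa [frobenius_def, map_add, map_mul, map_pow, map_ofNat, ← pow_mul,
        mul_comm 2 p, pow_mul, zero_pow (Nat.Prime.ne_zero hppr)] using this
    have key : (lam ^ p - lam) * (lam ^ p + lam + 6) = 0 := by
      linear_combination hroot - hlam
    rcases mul_eq_zero.mp key with h | h
    · exfalso
      obtain ⟨a, ha⟩ := exists_zmod_cast_of_pow_card (sub_eq_zero.mp h)
      have haroot : a ^ 2 + 6 * a + 6 = 0 := by
        apply φ.injective
        simp only [map_add, map_mul, map_pow, map_ofNat, map_zero]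
        rw [ha]; exact hlam
      exact h3 ⟨a + 3, by linear_combination -haroot⟩
    · have : lam ^ p = -6 - lam := by linear_combination h
      rw [this]; linear_combination -hsum
  -- the square root of lam/mu
  have hSp : S ^ p = S := by
    rw [hSdef, ← map_pow, ZMod.pow_card]
  set t : K := lam / S with htdef
  have ht2 : t ^ 2 = lam / mu := by
    rw [htdef, div_pow, hS2]
    rw [div_eq_div_iff h6K hmune]
    linear_combination lam * hprod
  have htp : t ^ (p + 1) = 1 := by
    have hSS : S * S = 6 := by linear_combination hS2
    rw [htdef, div_pow, pow_succ, pow_succ, hfrob, hSp, hSS,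
      div_eq_one_iff_eq h6K]
    linear_combination hprod
  -- conclude
  have hdvd : orderOf (lam / mu) ∣ (p + 1) / 2 := by
    apply orderOf_dvd_of_pow_eq_one
    rw [← ht2, ← pow_mul]
    have : 2 * ((p + 1) / 2) = p + 1 := by omega
    rw [this, htp]
  have hodd : Odd ((p + 1) / 2) := by
    rw [Nat.odd_iff]; omega
  rw [← Nat.not_even_iff_odd]
  intro he
  have h2d : 2 ∣ (p + 1) / 2 := dvd_trans he.two_dvd hdvd
  rw [Nat.odd_iff] at hodd
  omega
end

section
/- Let A = (a_{ij}) be an n×n matrix over a commutative ring with all diagonal entries zero. Then the permanent of I_n + A equals the sum over all permutations τ of {1,...,n} of the product of a_{j,τ(j)} over the non-fixed points j of τ. -/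
/-- The permanent of a square matrix. -/
def permanent {n : Type*} [Fintype n] [DecidableEq n] {R : Type*} [CommRing R]
    (M : Matrix n n R) : R :=
  ∑ σ : Equiv.Perm n, ∏ i, M i (σ i)

/-- If `A` has zero diagonal, then `per(I + A)` is the sum over all permutations `τ` of the
product of `a_{j,τ(j)}` over the non-fixed points `j` of `τ`. -/
theorem stmt8 {R : Type*} [CommRing R] (n : ℕ) (A : Matrix (Fin n) (Fin n) R)
    (hdiag : ∀ i, A i i = 0) :
    permanent (1 + A) =
      ∑ τ : Equiv.Perm (Fin n),
        ∏ j ∈ Finset.univ.filter (fun j => τ j ≠ j), A j (τ j) := by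
  unfold permanent
  refine Finset.sum_congr rfl fun σ _ => ?_
  rw [← Finset.prod_filter_mul_prod_filter_not Finset.univ (fun j => σ j ≠ j)
    (fun i => (1 + A) i (σ i))]
  have h2 : ∏ j ∈ Finset.univ.filter (fun j => ¬ σ j ≠ j), (1 + A) j (σ j) = 1 := by
    apply Finset.prod_eq_one
    intro j hj
    simp only [Finset.mem_filter, not_not] at hj
    simp [Matrix.add_apply, hj.2, Matrix.one_apply_eq, hdiag]
  rw [h2, mul_one]
  apply Finset.prod_congr rfl
  intro j hj
  simp only [Finset.mem_filter] at hj
  simp [Matrix.add_apply, Matrix.one_apply_ne' (by exact hj.2), hj.2]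
end

section
/- Let x_1, ..., x_s (s ≥ 3) be pairwise distinct elements of a field. Then the sum over all oriented s-cycles (i_1,...,i_s) on {1,...,s} (taken modulo cyclic rotation) of the product over r of 1/(x_{i_r} - x_{i_{r+1}}) (indices cyclic) equals 0. -/
open scoped Classical

private lemma frac_key {K : Type*} [Field K] {A B C : K} (h1 : A - C ≠ 0) (h2 : C - B ≠ 0) :
    (A - C)⁻¹ * (C - B)⁻¹ * (A - B) = (C - B)⁻¹ - (C - A)⁻¹ := by
  have h3 : C - A ≠ 0 := by rw [← neg_sub]; exact neg_ne_zero.2 h1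
  field_simp
  ring

private lemma insert_cycle {α : Type*} [DecidableEq α] [Fintype α] {τ : Equiv.Perm α} {p a : α}
    (hc : τ.IsCycle) (hsup : τ.support = Finset.univ.erase p) (ha : a ∈ τ.support) :
    (Equiv.swap p (τ a) * τ).IsCycle ∧ (Equiv.swap p (τ a) * τ).support = Finset.univ := by
  have hp : p ∉ τ.support := by rw [hsup]; exact Finset.notMem_erase p _
  have hτp : τ p = p := Equiv.Perm.notMem_support.1 hp
  have hap : a ≠ p := fun h => hp (h ▸ ha)
  have hτaa : τ a ≠ a := Equiv.Perm.mem_support.1 ha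
  have hτas : τ a ∈ τ.support := Equiv.Perm.apply_mem_support.2 ha
  have hτap : τ a ≠ p := fun h => hp (h ▸ hτas)
  set f := Equiv.swap p (τ a) * τ with hf
  have hfp : f p = τ a := by
    simp [hf, Equiv.Perm.mul_apply, hτp]
  have hfa : f a = p := by
    simp [hf, Equiv.Perm.mul_apply]
  have hfy : ∀ y, y ≠ p → y ≠ a → f y = τ y := by
    intro y h1 h2
    simp only [hf, Equiv.Perm.mul_apply]
    refine Equiv.swap_apply_of_ne_of_ne ?_ (τ.injective.ne h2)
    intro h
    exact h1 (τ.injective (by rw [h, hτp]))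
  have hmem : ∀ y : α, y ≠ p → y ∈ τ.support := by
    intro y hy; rw [hsup]; exact Finset.mem_erase.2 ⟨hy, Finset.mem_univ y⟩
  have hmain : ∀ k : ℕ, ∀ y, y ∈ τ.support → (τ ^ k) y = a → f.SameCycle y p := by
    intro k
    induction k with
    | zero =>
      intro y _ h
      simp only [pow_zero, Equiv.Perm.coe_one, id_eq] at h
      subst h
      exact ⟨1, by rw [zpow_one]; exact hfa⟩
    | succ k ih =>
      intro y hy h
      by_cases hya : y = a
      · subst hya; exact ⟨1, by rw [zpow_one]; exact hfa⟩
      · have hyp : y ≠ p := fun hh => hp (hh ▸ hy)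
        have h' : (τ ^ k) (τ y) = a := by
          rw [pow_succ, Equiv.Perm.mul_apply] at h; exact h
        have step : f.SameCycle y (τ y) := ⟨1, by rw [zpow_one]; exact hfy y hyp hya⟩
        exact step.trans (ih (τ y) (Equiv.Perm.apply_mem_support.2 hy) h')
  constructor
  · refine ⟨p, by rw [hfp]; exact hτap, fun y hy => ?_⟩
    by_cases hyp : y = p
    · exact ⟨0, by rw [hyp]; simp⟩
    · have hy' : y ∈ τ.support := hmem y hyp
      obtain ⟨k, hk⟩ := hc.exists_pow_eq (Equiv.Perm.mem_support.1 hy') hτaa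
      exact (hmain k y hy' hk).symm
  · ext y
    simp only [Finset.mem_univ, iff_true, Equiv.Perm.mem_support]
    by_cases hyp : y = p
    · subst hyp; rw [hfp]; exact hτap
    · by_cases hya : y = a
      · subst hya; rw [hfa]; exact Ne.symm hap
      · rw [hfy y hyp hya]; exact Equiv.Perm.mem_support.1 (hmem y hyp)

/-- For pairwise distinct `x_1, …, x_s` (`s ≥ 3`) in a field, the sum over all `s`-cycles `σ`
of `∏_r 1/(x_r - x_{σ(r)})` vanishes. -/
theorem stmt9 (K : Type*) [Field K] (s : ℕ) (hs : 3 ≤ s)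
    (x : Fin s → K) (hx : Function.Injective x) :
    ∑ σ ∈ Finset.univ.filter
        (fun σ : Equiv.Perm (Fin s) => σ.IsCycle ∧ σ.support = Finset.univ),
      ∏ r, (x r - x (σ r))⁻¹ = 0 := by
  have hs0 : 0 < s := by omega
  set p : Fin s := ⟨0, hs0⟩ with hpdef
  set B : Finset (Equiv.Perm (Fin s)) := Finset.univ.filter
      (fun τ : Equiv.Perm (Fin s) => τ.IsCycle ∧ τ.support = Finset.univ.erase p) with hB
  -- facts about members of the LHS index set
  have hAfact : ∀ σ : Equiv.Perm (Fin s), σ.IsCycle → σ.support = Finset.univ →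
      σ p ≠ p ∧ σ (σ p) ≠ p := by
    intro σ hc hsup
    have hσp : σ p ≠ p := Equiv.Perm.mem_support.1 (hsup ▸ Finset.mem_univ p)
    refine ⟨hσp, fun h => ?_⟩
    have hco : σ.IsCycleOn ↑(Finset.univ : Finset (Fin s)) := by
      have h0 := hc.isCycleOn
      rwa [← Equiv.Perm.coe_support_eq_set_support, hsup] at h0
    have h2 : (σ ^ 2) p = p := by rw [pow_two, Equiv.Perm.mul_apply]; exact h
    have hd := (hco.pow_apply_eq (Finset.mem_univ p)).1 h2
    rw [Finset.card_univ, Fintype.card_fin] at hd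
    have := Nat.le_of_dvd (by norm_num) hd
    omega
  -- the bijection between full cycles and (cycle on `univ.erase p`, insertion point)
  have hbij : ∑ σ ∈ Finset.univ.filter
        (fun σ : Equiv.Perm (Fin s) => σ.IsCycle ∧ σ.support = Finset.univ),
      ∏ r, (x r - x (σ r))⁻¹
      = ∑ q ∈ B ×ˢ Finset.univ.erase p,
          ∏ r, (x r - x ((Equiv.swap p (q.1 q.2) * q.1) r))⁻¹ := by
    refine Finset.sum_bij' (fun σ _ => (Equiv.swap p (σ p) * σ, σ⁻¹ p))
      (fun q _ => Equiv.swap p (q.1 q.2) * q.1) ?_ ?_ ?_ ?_ ?_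
    · -- maps into B ×ˢ erase p
      intro σ hσ
      obtain ⟨hc, hsup⟩ := (Finset.mem_filter.1 hσ).2
      obtain ⟨hσp, hσ2⟩ := hAfact σ hc hsup
      refine Finset.mem_product.2 ⟨Finset.mem_filter.2 ⟨Finset.mem_univ _, ?_, ?_⟩, ?_⟩
      · exact hc.swap_mul hσp hσ2
      · rw [Equiv.Perm.support_swap_mul_eq σ p hσ2, hsup, ← Finset.erase_eq]
      · refine Finset.mem_erase.2 ⟨fun h => hσp ?_, Finset.mem_univ _⟩
        conv_lhs => rw [← h]
        exact (Equiv.Perm.eq_inv_iff_eq.1 rfl : σ (σ⁻¹ p) = p)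
    · -- maps back into the filter
      intro q hq
      obtain ⟨hq1, hq2⟩ := Finset.mem_product.1 hq
      obtain ⟨htc, htsup⟩ := (Finset.mem_filter.1 hq1).2
      have ha : q.2 ∈ q.1.support := by rw [htsup]; exact hq2
      obtain ⟨h1, h2⟩ := insert_cycle htc htsup ha
      exact Finset.mem_filter.2 ⟨Finset.mem_univ _, h1, h2⟩
    · -- left inverse
      intro σ hσ
      obtain ⟨hc, hsup⟩ := (Finset.mem_filter.1 hσ).2
      obtain ⟨hσp, _⟩ := hAfact σ hc hsup
      have hval : (Equiv.swap p (σ p) * σ) (σ⁻¹ p) = σ p := by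
        rw [Equiv.Perm.mul_apply, (Equiv.Perm.eq_inv_iff_eq.1 rfl : σ (σ⁻¹ p) = p), Equiv.swap_apply_left]
      simp only [hval]
      rw [Equiv.swap_mul_self_mul]
    · -- right inverse
      intro q hq
      obtain ⟨hq1, hq2⟩ := Finset.mem_product.1 hq
      obtain ⟨htc, htsup⟩ := (Finset.mem_filter.1 hq1).2
      have hp : p ∉ q.1.support := by rw [htsup]; exact Finset.notMem_erase p _
      have hτp : q.1 p = p := Equiv.Perm.notMem_support.1 hp
      have hval : (Equiv.swap p (q.1 q.2) * q.1) p = q.1 q.2 := by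
        rw [Equiv.Perm.mul_apply, hτp, Equiv.swap_apply_left]
      have hval2 : (Equiv.swap p (q.1 q.2) * q.1) q.2 = p := by
        rw [Equiv.Perm.mul_apply, Equiv.swap_apply_right]
      refine Prod.ext ?_ ?_
      · simp only [hval]
        rw [Equiv.swap_mul_self_mul]
      · show (Equiv.swap p (q.1 q.2) * q.1)⁻¹ p = q.2
        rw [Equiv.Perm.inv_eq_iff_eq]
        exact hval2.symm
    · -- values agree
      intro σ hσ
      obtain ⟨hc, hsup⟩ := (Finset.mem_filter.1 hσ).2
      obtain ⟨hσp, _⟩ := hAfact σ hc hsup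
      have hval : (Equiv.swap p (σ p) * σ) (σ⁻¹ p) = σ p := by
        rw [Equiv.Perm.mul_apply, (Equiv.Perm.eq_inv_iff_eq.1 rfl : σ (σ⁻¹ p) = p), Equiv.swap_apply_left]
      simp only [hval]
      rw [Equiv.swap_mul_self_mul]
  rw [hbij, Finset.sum_product]
  apply Finset.sum_eq_zero
  intro τ hτ
  obtain ⟨htc, htsup⟩ := (Finset.mem_filter.1 hτ).2
  have hp : p ∉ τ.support := by rw [htsup]; exact Finset.notMem_erase p _
  have hτp : τ p = p := Equiv.Perm.notMem_support.1 hp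
  set P : K := ∏ r ∈ Finset.univ.erase p, (x r - x (τ r))⁻¹ with hP
  have hterm : ∀ a ∈ Finset.univ.erase p,
      (∏ r, (x r - x ((Equiv.swap p (τ a) * τ) r))⁻¹)
        = P * ((x p - x (τ a))⁻¹ - (x p - x a)⁻¹) := by
    intro a ha
    have hap : a ≠ p := (Finset.mem_erase.1 ha).1
    have has : a ∈ τ.support := by rw [htsup]; exact ha
    have hτaa : τ a ≠ a := Equiv.Perm.mem_support.1 has
    have hτas : τ a ∈ τ.support := Equiv.Perm.apply_mem_support.2 has
    have hτap : τ a ≠ p := fun h => hp (h ▸ hτas)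
    have e1 : (Equiv.swap p (τ a) * τ) p = τ a := by
      rw [Equiv.Perm.mul_apply, hτp, Equiv.swap_apply_left]
    have e2 : (Equiv.swap p (τ a) * τ) a = p := by
      rw [Equiv.Perm.mul_apply, Equiv.swap_apply_right]
    have e3 : ∀ r, r ≠ p → r ≠ a → (Equiv.swap p (τ a) * τ) r = τ r := by
      intro r h1 h2
      rw [Equiv.Perm.mul_apply]
      refine Equiv.swap_apply_of_ne_of_ne ?_ (τ.injective.ne h2)
      intro h
      exact h1 (τ.injective (by rw [h, hτp]))
    have hamem : a ∈ Finset.univ.erase p := ha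
    rw [← Finset.mul_prod_erase Finset.univ _ (Finset.mem_univ p),
      ← Finset.mul_prod_erase _ _ hamem, e1, e2]
    have hprod : (∏ r ∈ (Finset.univ.erase p).erase a,
        (x r - x ((Equiv.swap p (τ a) * τ) r))⁻¹)
        = ∏ r ∈ (Finset.univ.erase p).erase a, (x r - x (τ r))⁻¹ := by
      refine Finset.prod_congr rfl fun r hr => ?_
      have hra := (Finset.mem_erase.1 hr).1
      have hrp := (Finset.mem_erase.1 (Finset.mem_erase.1 hr).2).1
      rw [e3 r hrp hra]
    rw [hprod]
    have hP' : P = (x a - x (τ a))⁻¹ *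
        ∏ r ∈ (Finset.univ.erase p).erase a, (x r - x (τ r))⁻¹ := by
      rw [hP, ← Finset.mul_prod_erase _ _ hamem]
    have hne : x a - x (τ a) ≠ 0 := sub_ne_zero.2 (hx.ne (Ne.symm hτaa))
    have hprod2 : (∏ r ∈ (Finset.univ.erase p).erase a, (x r - x (τ r))⁻¹)
        = (x a - x (τ a)) * P := by
      rw [hP', ← mul_assoc, mul_inv_cancel₀ hne, one_mul]
    rw [hprod2]
    have hkey := frac_key (A := x a) (B := x (τ a)) (C := x p)
      (sub_ne_zero.2 (hx.ne hap)) (sub_ne_zero.2 (hx.ne (Ne.symm hτap)))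
    rw [← hkey]
    ring
  rw [Finset.sum_congr rfl hterm, ← Finset.mul_sum, Finset.sum_sub_distrib]
  have hsub : {a : Fin s | τ a ≠ a} ⊆ ↑(Finset.univ.erase p) := by
    intro a ha
    have h1 : a ∈ τ.support := Equiv.Perm.mem_support.2 ha
    rw [htsup] at h1
    exact Finset.mem_coe.2 h1
  have hsum := Equiv.Perm.sum_comp τ (Finset.univ.erase p) (fun a => (x p - x a)⁻¹) hsub
  rw [hsum, sub_self, mul_zero]
end

section
/- For every odd prime p and every t ∈ F_p, det(I_{p-1} + t C_p) = 1 + t^{p-1} in F_p, where C_p has zero diagonal and (i,j) entry (i-j)^{-1}. -/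
open Matrix Finset

private lemma det_corner {R : Type*} [CommRing R] (n : ℕ) (d : Fin (n+2) → R) (c : R) :
    Matrix.det (Matrix.of fun a b : Fin (n+2) =>
      if a = b then (1:R) else if (b:ℕ) = (a:ℕ)+1 then d b
      else if (a:ℕ) = n+1 ∧ (b:ℕ) = 0 then c else 0)
    = 1 + (-1)^(n+1) * c * ∏ b : Fin (n+1), d b.succ := by
  set A : Matrix (Fin (n+2)) (Fin (n+2)) R := Matrix.of fun a b : Fin (n+2) =>
      if a = b then (1:R) else if (b:ℕ) = (a:ℕ)+1 then d b
      else if (a:ℕ) = n+1 ∧ (b:ℕ) = 0 then c else 0 with hA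
  have hAab : ∀ a b : Fin (n+2), A a b = if a = b then (1:R) else if (b:ℕ) = (a:ℕ)+1 then d b
      else if (a:ℕ) = n+1 ∧ (b:ℕ) = 0 then c else 0 := fun a b => rfl
  have hdet0 : Matrix.det (A.submatrix (Fin.succAbove 0) Fin.succ) = 1 := by
    have htri : (A.submatrix (Fin.succAbove 0) Fin.succ).BlockTriangular id := by
      intro b b' hlt
      have hvlt : (b':ℕ) < (b:ℕ) := hlt
      have e1 : A.submatrix (Fin.succAbove 0) Fin.succ b b' = A b.succ b'.succ := by
        rw [Matrix.submatrix_apply, Fin.succAbove_zero]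
      rw [e1, hAab, if_neg (fun h => by
          have h2 := congrArg Fin.val h
          simp only [Fin.val_succ] at h2
          omega),
        if_neg (by simp only [Fin.val_succ]; omega),
        if_neg (by simp only [Fin.val_succ]; omega)]
    rw [Matrix.det_of_upperTriangular htri]
    refine Finset.prod_eq_one fun b _ => ?_
    have e1 : A.submatrix (Fin.succAbove 0) Fin.succ b b = A b.succ b.succ := by
      rw [Matrix.submatrix_apply, Fin.succAbove_zero]
    rw [e1, hAab, if_pos rfl]
  have hdetL : Matrix.det (A.submatrix (Fin.succAbove (Fin.last (n+1))) Fin.succ)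
      = ∏ b : Fin (n+1), d b.succ := by
    have htri : (A.submatrix (Fin.succAbove (Fin.last (n+1))) Fin.succ).BlockTriangular
        OrderDual.toDual := by
      intro b b' hlt
      have hvlt : (b:ℕ) < (b':ℕ) := hlt
      have e1 : A.submatrix (Fin.succAbove (Fin.last (n+1))) Fin.succ b b'
          = A b.castSucc b'.succ := by
        rw [Matrix.submatrix_apply, Fin.succAbove_last]
      rw [e1, hAab, if_neg (fun h => by
          have h2 := congrArg Fin.val h
          simp only [Fin.val_succ, Fin.coe_castSucc] at h2
          omega),
        if_neg (by simp only [Fin.val_succ, Fin.coe_castSucc]; omega),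
        if_neg (by
          simp only [Fin.coe_castSucc]
          rintro ⟨h1, -⟩
          have h3 := b.isLt
          omega)]
    rw [Matrix.det_of_lowerTriangular _ htri]
    refine Finset.prod_congr rfl fun b _ => ?_
    have e1 : A.submatrix (Fin.succAbove (Fin.last (n+1))) Fin.succ b b
        = A b.castSucc b.succ := by
      rw [Matrix.submatrix_apply, Fin.succAbove_last]
    rw [e1, hAab, if_neg (fun h => by
        have h2 := congrArg Fin.val h
        simp only [Fin.val_succ, Fin.coe_castSucc] at h2
        omega),
      if_pos (by simp only [Fin.val_succ, Fin.coe_castSucc])]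
  rw [show A.det = Matrix.det (A : Matrix (Fin (n+1).succ) (Fin (n+1).succ) R) from rfl,
    Matrix.det_succ_column_zero]
  have key : ∀ i : Fin (n+2),
      (-1)^(i:ℕ) * A i 0 * Matrix.det (A.submatrix i.succAbove Fin.succ)
      = (if i = 0 then (1:R) else 0)
        + (if i = Fin.last (n+1) then (-1)^(n+1) * c * ∏ b : Fin (n+1), d b.succ else 0) := by
    intro i
    by_cases h0 : i = 0
    · subst h0
      rw [if_pos rfl, if_neg (by rw [Fin.ext_iff, Fin.val_zero, Fin.val_last]; omega)]
      rw [show A 0 0 = 1 from by rw [hAab, if_pos rfl], hdet0]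
      norm_num
    · by_cases hL : i = Fin.last (n+1)
      · subst hL
        rw [if_neg h0, if_pos rfl]
        have hA0 : A (Fin.last (n+1)) 0 = c := by
          rw [hAab, if_neg h0, if_neg (by simp only [Fin.val_zero, Fin.val_last]; omega),
            if_pos ⟨rfl, rfl⟩]
        rw [hA0, hdetL, Fin.val_last]
        ring
      · rw [if_neg h0, if_neg hL]
        have hA0 : A i 0 = 0 := by
          rw [hAab, if_neg h0, if_neg (by simp only [Fin.val_zero]; omega), if_neg (by
            simp only [Fin.val_zero]
            rintro ⟨hi, -⟩
            exact hL (Fin.ext (by rw [Fin.val_last, hi])))]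
        rw [hA0]
        ring
  rw [Finset.sum_congr rfl fun i _ => key i, Finset.sum_add_distrib]
  rw [Finset.sum_ite_eq' Finset.univ (0 : Fin (n+2)) (fun _ => (1:R)),
    Finset.sum_ite_eq' Finset.univ (Fin.last (n+1))
      (fun _ => (-1)^(n+1) * c * ∏ b : Fin (n+1), d b.succ)]
  simp

private lemma sum_pow_field (m : ℕ) [Fact (Nat.Prime (m+3))] (e : ℕ) (he : 1 ≤ e) :
    (∑ u : ZMod (m+3), u ^ e) = if (m+2) ∣ e then -1 else 0 := by
  classical
  have hcoe : Function.Injective (fun v : (ZMod (m+3))ˣ => (v : ZMod (m+3))) := fun _ _ h => Units.ext h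
  have huniv : (Finset.univ : Finset (ZMod (m+3)))
      = insert 0 (Finset.univ.image (fun v : (ZMod (m+3))ˣ => (v : ZMod (m+3)))) := by
    symm
    apply Finset.eq_univ_of_card
    rw [Finset.card_insert_of_notMem (by
      intro hmem
      obtain ⟨v, _, hv⟩ := Finset.mem_image.mp hmem
      exact v.ne_zero hv)]
    rw [Finset.card_image_of_injective _ hcoe, Finset.card_univ,
      ZMod.card_units_eq_totient, Nat.totient_prime (Fact.out : Nat.Prime (m+3)), ZMod.card]
    omega
  rw [show (∑ u : ZMod (m+3), u ^ e) = ∑ u ∈ (Finset.univ : Finset (ZMod (m+3))), u ^ e from rfl,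
    huniv, Finset.sum_insert (by
      intro hmem
      obtain ⟨v, _, hv⟩ := Finset.mem_image.mp hmem
      exact v.ne_zero hv),
    Finset.sum_image (fun a _ b _ h => hcoe h), zero_pow (by omega), zero_add]
  have := FiniteField.sum_pow_units (ZMod (m+3)) e
  rw [ZMod.card] at this
  simpa using this

private lemma sum_T (m : ℕ) [Fact (Nat.Prime (m+3))] (X : ZMod (m+3)) (κ : ℕ) (hκ : κ ≤ m+1) :
    ∑ u : ZMod (m+3), u^(m+1) * (X - u)^κ = (κ : ZMod (m+3)) * X^(κ-1) := by
  have expand : ∀ u : ZMod (m+3), u^(m+1) * (X - u)^κ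
      = ∑ s ∈ Finset.range (κ+1),
          (X^s * (-1)^(κ-s) * (κ.choose s : ZMod (m+3))) * u^(κ-s+(m+1)) := by
    intro u
    rw [sub_eq_add_neg, add_pow, Finset.mul_sum]
    refine Finset.sum_congr rfl fun s hs => ?_
    rw [neg_pow, pow_add]
    ring
  rw [Finset.sum_congr rfl (fun u _ => expand u), Finset.sum_comm]
  have hdvd_iff : ∀ s, s ∈ Finset.range (κ+1) → ((m+2) ∣ (κ-s+(m+1)) ↔ (1 ≤ κ ∧ s = κ - 1)) := by
    intro s hs
    rw [Finset.mem_range] at hs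
    constructor
    · rintro ⟨c, hc⟩
      rcases c with _ | _ | c
      · omega
      · omega
      · have h2 : (m+2)*2 ≤ (m+2)*(c+1+1) := Nat.mul_le_mul_left _ (by omega)
        omega
    · rintro ⟨h1, rfl⟩
      exact ⟨1, by omega⟩
  rw [Finset.sum_eq_single (κ-1)]
  · rw [← Finset.mul_sum, sum_pow_field m _ (by omega)]
    rcases κ with _ | j
    · rw [if_neg (fun h => by have := Nat.le_of_dvd (by omega) h; omega)]
      simp
    · rw [if_pos (by simpa using (hdvd_iff j (Finset.mem_range.mpr (by omega))).mpr ⟨by omega, by omega⟩)]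
      have : (j+1) - j = 1 := by omega
      simp only [Nat.add_sub_cancel, this, pow_one, Nat.choose_succ_self_right]
      push_cast
      ring
  · intro s hs hne
    rw [← Finset.mul_sum, sum_pow_field m _ (by omega), if_neg (by
      rw [hdvd_iff s hs]
      rintro ⟨h1, rfl⟩
      exact hne rfl), mul_zero]
  · intro h
    exact absurd (Finset.mem_range.mpr (by omega)) h

/-- For every odd prime `p` and `t ∈ 𝔽_p`, `det(I_{p-1} + t C_p) = 1 + t^{p-1}` in `𝔽_p`. -/
theorem stmt15 (p : ℕ) [Fact p.Prime] (hodd : p ≠ 2) (t : ZMod p) :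
    Matrix.det
        ((1 : Matrix (Fin (p - 1)) (Fin (p - 1)) (ZMod p)) +
          t • Matrix.of fun i j : Fin (p - 1) =>
            if i = j then (0 : ZMod p)
            else ((((i : ℕ) : ZMod p) + 1) - (((j : ℕ) : ZMod p) + 1))⁻¹)
      = 1 + t ^ (p - 1) := by
  obtain ⟨m, rfl⟩ : ∃ m, p = m + 3 := by
    have h2 := (Fact.out : p.Prime).two_le
    exact ⟨p - 3, by omega⟩
  have hprime : (m+3).Prime := Fact.out
  have hmeven : m % 2 = 0 := by
    have hodd' : Odd (m+3) := hprime.odd_of_ne_two hodd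
    obtain ⟨r, hr⟩ := hodd'
    omega
  show Matrix.det
        ((1 : Matrix (Fin (m+2)) (Fin (m+2)) (ZMod (m+3))) +
          t • Matrix.of fun i j : Fin (m+2) =>
            if i = j then (0 : ZMod (m+3))
            else ((((i : ℕ) : ZMod (m+3)) + 1) - (((j : ℕ) : ZMod (m+3)) + 1))⁻¹)
      = 1 + t ^ (m+2)
  set x : Fin (m+2) → ZMod (m+3) := fun i => ((i:ℕ) : ZMod (m+3)) + 1 with hx
  set C : Matrix (Fin (m+2)) (Fin (m+2)) (ZMod (m+3)) := Matrix.of fun i j : Fin (m+2) =>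
      if i = j then (0 : ZMod (m+3))
      else ((((i : ℕ) : ZMod (m+3)) + 1) - (((j : ℕ) : ZMod (m+3)) + 1))⁻¹ with hC
  set N : Matrix (Fin (m+2)) (Fin (m+2)) (ZMod (m+3)) := Matrix.of fun a b : Fin (m+2) =>
      if (b:ℕ) = (a:ℕ)+1 then ((b:ℕ) : ZMod (m+3))
      else if (a:ℕ) = m+1 ∧ (b:ℕ) = 0 then -1 else 0 with hN
  have hNab : ∀ a b : Fin (m+2), N a b = if (b:ℕ) = (a:ℕ)+1 then ((b:ℕ) : ZMod (m+3))
      else if (a:ℕ) = m+1 ∧ (b:ℕ) = 0 then -1 else 0 := by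
    intro a b; rw [hN]; rfl
  have hCab : ∀ i j : Fin (m+2), C i j = if i = j then (0 : ZMod (m+3)) else (x i - x j)⁻¹ := by
    intro i j; rw [hC]; rfl
  have hxcast : ∀ i : Fin (m+2), x i = (((i:ℕ)+1 : ℕ) : ZMod (m+3)) := by
    intro i; rw [hx]; push_cast; ring
  have hxval : ∀ i : Fin (m+2), (x i).val = (i:ℕ)+1 := by
    intro i; rw [hxcast i, ZMod.val_cast_of_lt (by omega)]
  have hxne : ∀ i, x i ≠ 0 := by
    intro i h
    have h2 := hxval i
    rw [h, ZMod.val_zero] at h2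
    omega
  have hxinj : Function.Injective x := by
    intro i j h
    have h2 := congrArg ZMod.val h
    rw [hxval, hxval] at h2
    exact Fin.ext (by omega)
  have hinv : ∀ u : ZMod (m+3), u ≠ 0 → u⁻¹ = u^(m+1) := by
    intro u hu
    refine inv_eq_of_mul_eq_one_right ?_
    rw [← pow_succ']
    exact ZMod.pow_card_sub_one_eq_one hu
  have hCP : C * Matrix.vandermonde x = Matrix.vandermonde x * N := by
    ext i k
    rw [Matrix.mul_apply, Matrix.mul_apply]
    have hRN : (∑ a : Fin (m+2), Matrix.vandermonde x i a * N a k)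
        = if (k:ℕ) = 0 then -(x i)^(m+1) else ((k:ℕ) : ZMod (m+3)) * (x i)^((k:ℕ)-1) := by
      by_cases hk0 : (k:ℕ) = 0
      · rw [if_pos hk0, Finset.sum_eq_single (Fin.last (m+1))]
        · rw [Matrix.vandermonde_apply, hNab,
            if_neg (by rw [Fin.val_last]; omega),
            if_pos ⟨Fin.val_last _, hk0⟩]
          rw [Fin.val_last]
          ring
        · intro a _ hne
          rw [hNab, if_neg (by omega), if_neg (by
            rintro ⟨h1, -⟩
            exact hne (Fin.ext (by rw [Fin.val_last]; omega)))]
          exact mul_zero _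
        · intro h; exact absurd (Finset.mem_univ _) h
      · rw [if_neg hk0, Finset.sum_eq_single (⟨(k:ℕ)-1, by omega⟩ : Fin (m+2))]
        · rw [Matrix.vandermonde_apply, hNab, if_pos (show (k:ℕ) = (k:ℕ)-1+1 by omega)]
          exact mul_comm _ _
        · intro a _ hne
          rw [hNab, if_neg (fun h => hne (Fin.ext (by
              simp only [] at h ⊢
              omega))), if_neg (by
            rintro ⟨-, h⟩
            exact hk0 h)]
          exact mul_zero _
        · intro h; exact absurd (Finset.mem_univ _) h
    have hLHS : (∑ j : Fin (m+2), C i j * Matrix.vandermonde x j k)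
        = if (k:ℕ) = 0 then -(x i)^(m+1) else ((k:ℕ) : ZMod (m+3)) * (x i)^((k:ℕ)-1) := by
      classical
      set g : ZMod (m+3) → ZMod (m+3) :=
        fun y => (if x i = y then 0 else (x i - y)⁻¹) * y ^ (k:ℕ) with hg
      have hCg : ∀ j, C i j * Matrix.vandermonde x j k = g (x j) := by
        intro j
        rw [Matrix.vandermonde_apply, hCab]
        show _ = (if x i = x j then 0 else (x i - x j)⁻¹) * x j ^ (k:ℕ)
        by_cases h : i = j
        · subst h; simp
        · rw [if_neg h, if_neg (fun hh => h (hxinj hh))]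
      have huniv : (Finset.univ : Finset (ZMod (m+3))) = insert 0 (Finset.univ.image x) := by
        symm
        apply Finset.eq_univ_of_card
        rw [Finset.card_insert_of_notMem (by
          intro hmem
          obtain ⟨j, _, hj⟩ := Finset.mem_image.mp hmem
          exact hxne j hj), Finset.card_image_of_injective _ hxinj, Finset.card_univ,
          Fintype.card_fin, ZMod.card]
      have hsplit : (∑ y : ZMod (m+3), g y) = g 0 + ∑ j : Fin (m+2), g (x j) := by
        rw [show (∑ y : ZMod (m+3), g y) = ∑ y ∈ (Finset.univ : Finset (ZMod (m+3))), g y from rfl,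
          huniv, Finset.sum_insert (by
            intro hmem
            obtain ⟨j, _, hj⟩ := Finset.mem_image.mp hmem
            exact hxne j hj), Finset.sum_image (fun a _ b _ h => hxinj h)]
      have hre : (∑ y : ZMod (m+3), g y) = ∑ u : ZMod (m+3), u^(m+1) * (x i - u)^(k:ℕ) := by
        refine (Fintype.sum_equiv (Equiv.subLeft (x i)) _ _ ?_).symm
        intro u
        simp only [Equiv.subLeft_apply, hg]
        by_cases hu : u = 0
        · subst hu
          simp [zero_pow (show m+1 ≠ 0 by omega)]
        · rw [if_neg (fun hh => hu (sub_eq_self.mp hh.symm)), sub_sub_cancel, hinv u hu]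
      have hT := sum_T m (x i) (k:ℕ) (by omega)
      have hg0 : g 0 = if (k:ℕ) = 0 then (x i)⁻¹ else 0 := by
        show (if x i = 0 then 0 else (x i - 0)⁻¹) * (0:ZMod (m+3)) ^ (k:ℕ) = _
        rw [if_neg (hxne i), sub_zero]
        by_cases hk0 : (k:ℕ) = 0
        · rw [hk0, pow_zero, mul_one, if_pos rfl]
        · rw [zero_pow hk0, mul_zero, if_neg hk0]
      calc (∑ j : Fin (m+2), C i j * Matrix.vandermonde x j k)
          = ∑ j : Fin (m+2), g (x j) := Finset.sum_congr rfl (fun j _ => hCg j)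
        _ = (∑ y : ZMod (m+3), g y) - g 0 := by rw [hsplit]; ring
        _ = ((k:ℕ) : ZMod (m+3)) * (x i)^((k:ℕ)-1) - g 0 := by rw [hre, hT]
        _ = _ := by
            by_cases hk0 : (k:ℕ) = 0
            · rw [hg0, if_pos hk0, if_pos hk0, hk0, hinv _ (hxne i)]
              simp
            · rw [hg0, if_neg hk0, if_neg hk0, sub_zero]
    rw [hLHS, hRN]
  have hMP : (1 + t • C) * Matrix.vandermonde x = Matrix.vandermonde x * (1 + t • N) := by
    rw [Matrix.add_mul, Matrix.mul_add, Matrix.one_mul, Matrix.mul_one, Matrix.smul_mul,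
      Matrix.mul_smul, hCP]
  have hdetP : Matrix.det (Matrix.vandermonde x) ≠ 0 :=
    (Matrix.det_vandermonde_ne_zero_iff).mpr hxinj
  have hdd : Matrix.det (1 + t • C) = Matrix.det (1 + t • N) := by
    have h := congrArg Matrix.det hMP
    rw [Matrix.det_mul, Matrix.det_mul, mul_comm (Matrix.det (1 + t • C))] at h
    exact mul_left_cancel₀ hdetP h
  rw [hdd]
  have hNform : (1 + t • N) = Matrix.of (fun a b : Fin (m+2) =>
      if a = b then (1 : ZMod (m+3)) else if (b:ℕ) = (a:ℕ)+1 then t * ((b:ℕ) : ZMod (m+3))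
      else if (a:ℕ) = m+1 ∧ (b:ℕ) = 0 then -t else 0) := by
    ext a b
    rw [Matrix.add_apply, Matrix.smul_apply, Matrix.one_apply, Matrix.of_apply, hNab, smul_eq_mul]
    by_cases hab : a = b
    · subst hab
      rw [if_pos rfl, if_pos rfl, if_neg (by omega), if_neg (by omega)]
      ring
    · rw [if_neg hab, if_neg hab]
      split_ifs with h1 h2 <;> ring
  rw [hNform, det_corner m (fun b => t * ((b:ℕ) : ZMod (m+3))) (-t)]
  have hprod : (∏ b : Fin (m+1), (t * (((b.succ : Fin (m+2)):ℕ) : ZMod (m+3))))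
      = t^(m+1) * ((Nat.factorial (m+1) : ℕ) : ZMod (m+3)) := by
    rw [Finset.prod_mul_distrib, Finset.prod_const, Finset.card_univ, Fintype.card_fin]
    congr 1
    rw [← Nat.cast_prod]
    congr 1
    simp only [Fin.val_succ]
    rw [Fin.prod_univ_eq_prod_range (fun i => i+1) (m+1),
      Finset.prod_range_add_one_eq_factorial]
  rw [hprod]
  have hfact : ((Nat.factorial (m+1) : ℕ) : ZMod (m+3)) = 1 := by
    have hw := ZMod.wilsons_lemma (p := m+3)
    rw [show m+3-1 = m+2 from rfl, Nat.factorial_succ] at hw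
    push_cast at hw
    have hm2 : ((m : ZMod (m+3)) + 2) = -1 := by
      have h3 : ((m+3 : ℕ) : ZMod (m+3)) = 0 := ZMod.natCast_self _
      push_cast at h3
      linear_combination h3
    linear_combination ((Nat.factorial (m+1) : ℕ) : ZMod (m+3)) * hm2 - hw
  rw [hfact]
  have hsign : ((-1 : ZMod (m+3)))^(m+1) = -1 := Odd.neg_one_pow ⟨m/2, by omega⟩
  rw [hsign]
  ring
end

section
/- Let p ≡ 3 (mod 4) be an odd prime, m = (p-1)/2, and let μ_m ⊂ F_p^× be the set of m-th roots of unity (equal to the set of nonzero squares {1^2,...,m^2}). For 0 ≤ k ≤ m-1, the sum over t ∈ μ_m \ {1} of t^k/(1-t) equals (m-1)/2 if k=0 and k - (m+1)/2 if 1 ≤ k ≤ m-1 (as elements of F_p). -/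
open Finset

private lemma stmt16_sum_pow (p m j : ℕ) [Fact p.Prime] (hm : 2 * m = p - 1)
    (hj : 0 < j) (hjm : j < m) :
    ∑ t ∈ Finset.univ.filter (fun x : ZMod p => x ^ m = 1), t ^ j = 0 := by
  obtain ⟨g, hg⟩ := IsCyclic.exists_generator (α := (ZMod p)ˣ)
  have hog : orderOf g = p - 1 := by
    rw [orderOf_eq_card_of_forall_mem_zpowers hg, Nat.card_eq_fintype_card, ZMod.card_units]
  set S := Finset.univ.filter (fun x : ZMod p => x ^ m = 1) with hS
  set s : ZMod p := (g : ZMod p) ^ 2 with hs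
  have hsm : s ^ m = 1 := by
    rw [hs, ← pow_mul, ← Units.val_pow_eq_pow_val, hm, ← hog, pow_orderOf_eq_one, Units.val_one]
  have hs0 : s ≠ 0 := by
    intro h; rw [h] at hsm; simp [zero_pow (by omega : m ≠ 0)] at hsm
  have hsj : s ^ j ≠ 1 := by
    intro h
    rw [hs, ← pow_mul, ← Units.val_pow_eq_pow_val, Units.val_eq_one] at h
    have := orderOf_dvd_of_pow_eq_one h
    rw [hog, ← hm] at this
    have : m ∣ j := (Nat.mul_dvd_mul_iff_left (by norm_num : 0 < 2)).mp this
    exact absurd (Nat.le_of_dvd hj this) (by omega)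
  have himg : S.image (fun t => s * t) = S := by
    apply Finset.eq_of_subset_of_card_le
    · intro x hx
      simp only [Finset.mem_image] at hx
      obtain ⟨t, ht, rfl⟩ := hx
      simp only [hS, Finset.mem_filter, Finset.mem_univ, true_and] at ht ⊢
      rw [mul_pow, hsm, ht, mul_one]
    · rw [Finset.card_image_of_injective _ (mul_right_injective₀ hs0)]
  have key : ∑ t ∈ S, t ^ j = s ^ j * ∑ t ∈ S, t ^ j := by
    conv_lhs => rw [← himg]
    rw [Finset.sum_image (fun a _ b _ h => mul_left_cancel₀ hs0 h)]
    simp [mul_pow, Finset.mul_sum]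
  have : (s ^ j - 1) * ∑ t ∈ S, t ^ j = 0 := by
    rw [sub_mul, one_mul, ← key, sub_self]
  rcases mul_eq_zero.mp this with h | h
  · exact absurd (sub_eq_zero.mp h) hsj
  · exact h

/-- For `p ≡ 3 (mod 4)`, `m = (p-1)/2`, and `0 ≤ k ≤ m-1`, the sum over the `m`-th roots of
unity `t ≠ 1` in `𝔽_p` of `t^k/(1-t)` equals `(m-1)/2` if `k = 0` and `k - (m+1)/2` otherwise. -/
theorem stmt16 (p : ℕ) [Fact p.Prime] (hp : p % 4 = 3) (k : ℕ)
    (hk : k ≤ (p - 1) / 2 - 1) :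
    ∑ t ∈ (Finset.univ.filter (fun x : ZMod p => x ^ ((p - 1) / 2) = 1)).erase 1,
        t ^ k / (1 - t)
      = if k = 0 then ((((p - 1) / 2 - 1) / 2 : ℕ) : ZMod p)
        else (k : ZMod p) - ((((p - 1) / 2 + 1) / 2 : ℕ) : ZMod p) := by
  have pp : p.Prime := Fact.out
  have hp3 : 3 ≤ p := by omega
  set m := (p - 1) / 2 with hmdef
  have hm2 : 2 * m = p - 1 := by omega
  have hmo : m % 2 = 1 := by omega
  have hm1 : 1 ≤ m := by omega
  have hmodd : Odd m := Nat.odd_iff.mpr hmo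
  set S := Finset.univ.filter (fun x : ZMod p => x ^ m = 1) with hS
  have h2 : (2 : ZMod p) ≠ 0 := by
    intro h
    have : ((2 : ℕ) : ZMod p) = 0 := by exact_mod_cast h
    rw [ZMod.natCast_eq_zero_iff] at this
    have := Nat.le_of_dvd (by norm_num) this
    omega
  have hneg1 : (-1 : ZMod p) ≠ 1 := by
    intro h
    exact h2 (by linear_combination -h)
  -- membership facts
  have hmem : ∀ t : ZMod p, t ∈ S.erase 1 → t ^ m = 1 ∧ t ≠ 1 ∧ t ≠ 0 ∧ 1 - t ≠ 0 := by
    intro t ht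
    rw [Finset.mem_erase, hS, Finset.mem_filter] at ht
    obtain ⟨ht1, _, htm⟩ := ht
    have ht0 : t ≠ 0 := by
      intro h; rw [h, zero_pow (by omega : m ≠ 0)] at htm; exact zero_ne_one htm
    exact ⟨htm, ht1, ht0, sub_ne_zero.mpr (fun h => ht1 h.symm)⟩
  -- cardinality of S
  have hcard : S.card = m := by
    classical
    set S' := Finset.univ.filter (fun x : ZMod p => x ^ m = -1) with hS'
    have hdisj : Disjoint S S' := by
      rw [Finset.disjoint_left]
      intro a ha ha'
      rw [hS, Finset.mem_filter] at ha
      rw [hS', Finset.mem_filter] at ha'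
      rw [ha.2] at ha'
      exact hneg1 ha'.2.symm
    have hunion : S ∪ S' = Finset.univ.filter (fun x : ZMod p => x ≠ 0) := by
      ext x
      simp only [hS, hS', Finset.mem_union, Finset.mem_filter, Finset.mem_univ, true_and]
      constructor
      · rintro (h | h) rfl <;>
          rw [zero_pow (by omega : m ≠ 0)] at h
        · exact zero_ne_one h
        · exact h2 (by linear_combination 2 * h)
      · intro hx
        have : (x ^ m) ^ 2 = 1 := by
          rw [← pow_mul, mul_comm m 2, hm2, ZMod.pow_card_sub_one_eq_one hx]
        rw [sq, mul_self_eq_one_iff] at this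
        exact this
    have hcard' : S'.card = S.card := by
      have : S'.image (fun x => -x) = S := by
        ext x
        simp only [Finset.mem_image, hS, hS', Finset.mem_filter, Finset.mem_univ, true_and]
        constructor
        · rintro ⟨y, hy, rfl⟩
          rw [hmodd.neg_pow, hy, neg_neg]
        · intro hx
          exact ⟨-x, by rw [hmodd.neg_pow, hx], neg_neg x⟩
      rw [← this, Finset.card_image_of_injective _ neg_injective]
    have hcu : (Finset.univ.filter (fun x : ZMod p => x ≠ 0)).card = p - 1 := by
      rw [Finset.filter_ne', Finset.card_erase_of_mem (Finset.mem_univ _)]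
      simp [ZMod.card]
    have := Finset.card_union_of_disjoint hdisj
    rw [hunion, hcu, hcard'] at this
    omega
  have h1S : (1 : ZMod p) ∈ S := by
    simp [hS]
  have hcardE : (S.erase 1).card = m - 1 := by
    rw [Finset.card_erase_of_mem h1S, hcard]
  -- sum of inverses
  have hsum_inv : ∑ t ∈ S.erase 1, (1 - t)⁻¹ = ((m - 1 : ℕ) : ZMod p) * (2 : ZMod p)⁻¹ := by
    have key : ∑ t ∈ S.erase 1, ((1 - t)⁻¹ - (2 : ZMod p)⁻¹) = 0 := by
      apply Finset.sum_involution (g := fun t _ => t⁻¹)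
      · intro t ht
        obtain ⟨htm, ht1, ht0, h1t⟩ := hmem t ht
        have e : (1 - t⁻¹)⁻¹ = -t * (1 - t)⁻¹ := by
          have e1 : (1 - t⁻¹) = -(t⁻¹) * (1 - t) := by
            field_simp
            ring
          rw [e1, mul_inv, inv_neg, inv_inv, neg_mul]
        rw [e]
        have := mul_inv_cancel₀ (sub_ne_zero.mpr (fun h => ht1 h.symm) : (1 : ZMod p) - t ≠ 0)
        have h22 := mul_inv_cancel₀ h2
        linear_combination this - h22
      · intro t ht _
        obtain ⟨htm, ht1, ht0, _⟩ := hmem t ht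
        intro h
        have htt : t * t = 1 := by
          have h' := congrArg (· * t) h
          simp only [inv_mul_cancel₀ ht0] at h'
          exact h'.symm
        rcases mul_self_eq_one_iff.mp htt with rfl | rfl
        · exact ht1 rfl
        · rw [hmodd.neg_pow, one_pow] at htm
          exact hneg1 htm
      · intro t ht
        exact inv_inv t
      · intro t ht
        obtain ⟨htm, ht1, ht0, _⟩ := hmem t ht
        rw [Finset.mem_erase, hS, Finset.mem_filter]
        refine ⟨fun h => ht1 (by rw [← inv_inv t, h, inv_one]), Finset.mem_univ _, ?_⟩
        rw [inv_pow, htm, inv_one]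
    rw [Finset.sum_sub_distrib, Finset.sum_const, hcardE, sub_eq_zero] at key
    rw [key, nsmul_eq_mul]
  -- sum over S of t^j, for all j < m
  have hSpow : ∀ j : ℕ, j < m → ∑ t ∈ S, t ^ j =
      if j = 0 then ((m : ℕ) : ZMod p) else 0 := by
    intro j hjm
    rcases Nat.eq_zero_or_pos j with rfl | hj
    · simp [hcard]
    · rw [if_neg (by omega)]
      exact stmt16_sum_pow p m j hm2 hj hjm
  have hEpow : ∀ j : ℕ, j < m → ∑ t ∈ S.erase 1, t ^ j =
      (if j = 0 then ((m : ℕ) : ZMod p) else 0) - 1 := by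
    intro j hjm
    have h := Finset.sum_erase_add S (fun t => t ^ j) h1S
    simp only [one_pow] at h
    rw [← hSpow j hjm, ← h]
    ring
  -- the geometric decomposition
  have step : ∀ t ∈ S.erase 1, t ^ k / (1 - t) = (1 - t)⁻¹ - ∑ j ∈ Finset.range k, t ^ j := by
    intro t ht
    obtain ⟨htm, ht1, ht0, h1t⟩ := hmem t ht
    have hg := geom_sum_mul t k
    field_simp
    linear_combination -hg
  rw [Finset.sum_congr rfl step, Finset.sum_sub_distrib, hsum_inv, Finset.sum_comm]
  have hinner : ∑ j ∈ Finset.range k, ∑ t ∈ S.erase 1, t ^ j =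
      ((m : ℕ) : ZMod p) * (if 0 ∈ Finset.range k then (1 : ZMod p) else 0) - k := by
    rw [Finset.sum_congr rfl (fun j hj => hEpow j (by
        rw [Finset.mem_range] at hj; omega))]
    rw [Finset.sum_sub_distrib, Finset.sum_const, Finset.card_range, nsmul_eq_mul, mul_one]
    congr 1
    rw [Finset.sum_ite_eq' (Finset.range k) 0 (fun _ => ((m : ℕ) : ZMod p))]
    split_ifs <;> ring
  rw [hinner]
  have ecast1 : ((m - 1 : ℕ) : ZMod p) = (m : ZMod p) - 1 := by
    push_cast [Nat.cast_sub hm1]; ring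
  have e0 : (((m - 1) / 2 : ℕ) : ZMod p) * 2 = ((m - 1 : ℕ) : ZMod p) := by
    have h' : ((m - 1) / 2 : ℕ) * 2 = m - 1 := by omega
    calc (((m - 1) / 2 : ℕ) : ZMod p) * 2 = (((m - 1) / 2 * 2 : ℕ) : ZMod p) := by
          push_cast; ring
      _ = _ := by rw [h']
  have e1 : (((m + 1) / 2 : ℕ) : ZMod p) * 2 = ((m : ℕ) : ZMod p) + 1 := by
    have h' : ((m + 1) / 2 : ℕ) * 2 = m + 1 := by omega
    calc (((m + 1) / 2 : ℕ) : ZMod p) * 2 = (((m + 1) / 2 * 2 : ℕ) : ZMod p) := by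
          push_cast; ring
      _ = _ := by rw [h']; push_cast; ring
  have hinv : (2 : ZMod p)⁻¹ * 2 = 1 := inv_mul_cancel₀ h2
  by_cases hk0 : k = 0
  · subst hk0
    rw [if_pos rfl]
    simp only [Finset.range_zero, Finset.notMem_empty, if_false, mul_zero, Nat.cast_zero,
      sub_zero]
    apply mul_right_cancel₀ h2
    linear_combination ((m - 1 : ℕ) : ZMod p) * hinv - e0
  · rw [if_neg hk0, if_pos (Finset.mem_range.mpr (by omega : 0 < k)), mul_one]
    apply mul_right_cancel₀ h2
    linear_combination ((m - 1 : ℕ) : ZMod p) * hinv + e1 + ecast1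
end

section
/- Let p ≡ 3 (mod 4) be an odd prime and m = (p-1)/2. Let Q_p be the m×m matrix over F_p with zero diagonal and (i,j) entry (i^2 - j^2)^{-1} for i ≠ j. Then for every u ∈ F_p, per(I_m + u Q_p) = 1 in F_p. -/
section Aux
open Finset Polynomial Matrix

variable {n : Type*} [Fintype n] [DecidableEq n] {R : Type*} [CommRing R]

lemma permanent_eq (M : Matrix n n R) : _root_.permanent M = Matrix.permanent M := by
  rw [← Matrix.permanent_transpose]; rfl

lemma permanent_submatrix (e : Equiv.Perm n) (M : Matrix n n R) :
    _root_.permanent (M.submatrix e e) = _root_.permanent M := by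
  rw [permanent_eq, permanent_eq]
  have : M.submatrix e e = (M.submatrix e id).submatrix id e := by
    rw [Matrix.submatrix_submatrix]; rfl
  rw [this, Matrix.permanent_permute_rows, Matrix.permanent_permute_cols]

lemma permanent_transpose' (M : Matrix n n R) : _root_.permanent Mᵀ = _root_.permanent M := by
  rw [permanent_eq, permanent_eq, Matrix.permanent_transpose]

lemma permanent_one' : _root_.permanent (1 : Matrix n n R) = (1 : R) := by
  rw [permanent_eq, Matrix.permanent_one]

def qm (p m : ℕ) : Matrix (Fin m) (Fin m) (ZMod p) :=
  Matrix.of fun i j => if i = j then (0 : ZMod p)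
    else ((((i : ℕ) : ZMod p) + 1) ^ 2 - (((j : ℕ) : ZMod p) + 1) ^ 2)⁻¹

def fper (p m : ℕ) (u : ZMod p) : ZMod p := _root_.permanent (1 + u • qm p m)

lemma fper_neg (p m : ℕ) [Fact p.Prime] (u : ZMod p) : fper p m (-u) = fper p m u := by
  rw [fper, fper, ← permanent_transpose' (1 + u • qm p m)]
  congr 1
  ext i j
  simp only [Matrix.transpose_apply, Matrix.add_apply, Matrix.one_apply, Matrix.smul_apply,
    qm, Matrix.of_apply, smul_eq_mul]
  rcases eq_or_ne i j with rfl | h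
  · simp
  · rw [if_neg h, if_neg (Ne.symm h), if_neg h, if_neg (Ne.symm h),
      show ((((j : ℕ) : ZMod p) + 1) ^ 2 - (((i : ℕ) : ZMod p) + 1) ^ 2)
        = -((((i : ℕ) : ZMod p) + 1) ^ 2 - (((j : ℕ) : ZMod p) + 1) ^ 2) by ring, inv_neg]
    ring

lemma fper_scale (p m : ℕ) [Fact p.Prime] (hm : 2 * m + 1 = p) (g : ZMod p) (hg : g ≠ 0)
    (u : ZMod p) : fper p m ((g ^ 2)⁻¹ * u) = fper p m u := by
  have hcast : ∀ i : Fin m, (((i : ℕ) : ZMod p) + 1) ≠ 0 := by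
    intro i
    have hi : (i : ℕ) < m := i.isLt
    have : ((((i : ℕ) + 1 : ℕ)) : ZMod p) ≠ 0 := by
      rw [Ne, ZMod.natCast_eq_zero_iff]
      intro h
      have := Nat.le_of_dvd (by omega) h
      omega
    simpa using this
  set x : Fin m → ZMod p := fun i => g * (((i : ℕ) : ZMod p) + 1) with hx
  have hx0 : ∀ i, x i ≠ 0 := fun i => mul_ne_zero hg (hcast i)
  set r : Fin m → ℕ := fun i => if (x i).val ≤ m then (x i).val else p - (x i).val with hr
  have hr1 : ∀ i, 1 ≤ r i ∧ r i ≤ m := by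
    intro i
    have hv : (x i).val < p := ZMod.val_lt _
    have hv0 : (x i).val ≠ 0 := fun h => hx0 i ((ZMod.val_eq_zero _).mp h)
    by_cases h : (x i).val ≤ m
    · have hri : r i = (x i).val := if_pos h
      omega
    · have hri : r i = p - (x i).val := if_neg h
      omega
  have hrcast : ∀ i, ((r i : ℕ) : ZMod p) = x i ∨ ((r i : ℕ) : ZMod p) = - x i := by
    intro i
    have hv : (x i).val < p := ZMod.val_lt _
    by_cases h : (x i).val ≤ m
    · left
      have hri : r i = (x i).val := if_pos h
      rw [hri, ZMod.natCast_val, ZMod.cast_id]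
    · right
      have hri : r i = p - (x i).val := if_neg h
      rw [hri, Nat.cast_sub hv.le, ZMod.natCast_self, zero_sub, ZMod.natCast_val, ZMod.cast_id]
  have hmlt : ∀ i, r i - 1 < m := fun i => by have := hr1 i; omega
  set π : Fin m → Fin m := fun i => ⟨r i - 1, hmlt i⟩ with hπ
  have hπc : ∀ i, (((π i : ℕ) : ZMod p) + 1) = ((r i : ℕ) : ZMod p) := by
    intro i
    have h1 := (hr1 i).1
    have h2 : (r i - 1) + 1 = r i := by omega
    show ((r i - 1 : ℕ) : ZMod p) + 1 = ((r i : ℕ) : ZMod p)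
    conv_rhs => rw [← h2]
    push_cast
    ring
  have hπsq : ∀ i, (((π i : ℕ) : ZMod p) + 1) ^ 2 = g ^ 2 * ((((i : ℕ) : ZMod p) + 1)) ^ 2 := by
    intro i
    rw [hπc i]
    rcases hrcast i with h | h <;> rw [h, hx] <;> ring
  have hg2 : g ^ 2 ≠ 0 := pow_ne_zero _ hg
  have hinj : Function.Injective π := by
    intro i j hij
    have h2 : ((((i : ℕ) : ZMod p) + 1)) ^ 2 = ((((j : ℕ) : ZMod p) + 1)) ^ 2 := by
      have h := (hπsq i).symm.trans (by rw [hij, hπsq j])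
      exact mul_left_cancel₀ hg2 h
    have h3 : ((((i : ℕ) : ZMod p) + 1) - ((((j : ℕ) : ZMod p)) + 1)) *
        ((((i : ℕ) : ZMod p) + 1) + ((((j : ℕ) : ZMod p)) + 1)) = 0 := by
      linear_combination h2
    rcases mul_eq_zero.mp h3 with h | h
    · have hij' : ((i : ℕ) : ZMod p) = ((j : ℕ) : ZMod p) := by linear_combination h
      apply Fin.ext
      calc (i : ℕ) = ((i : ℕ) : ZMod p).val := (ZMod.val_cast_of_lt (by omega)).symm
        _ = ((j : ℕ) : ZMod p).val := by rw [hij']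
        _ = (j : ℕ) := ZMod.val_cast_of_lt (by omega)
    · exfalso
      have hz : (((i : ℕ) + (j : ℕ) + 2 : ℕ) : ZMod p) = 0 := by push_cast; linear_combination h
      rw [ZMod.natCast_eq_zero_iff] at hz
      have := Nat.le_of_dvd (by omega) hz
      have hi : (i : ℕ) < m := i.isLt
      have hj : (j : ℕ) < m := j.isLt
      omega
  let e : Equiv.Perm (Fin m) := Equiv.ofBijective π (Finite.injective_iff_bijective.mp hinj)
  have key : (1 + u • qm p m).submatrix e e = 1 + ((g ^ 2)⁻¹ * u) • qm p m := by
    ext i j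
    have hee : e i = e j ↔ i = j := EmbeddingLike.apply_eq_iff_eq e
    simp only [Matrix.submatrix_apply, Matrix.add_apply, Matrix.one_apply, Matrix.smul_apply,
      qm, Matrix.of_apply, smul_eq_mul]
    rcases eq_or_ne i j with rfl | h
    · simp
    · rw [if_neg (fun hh => h (hee.mp hh)), if_neg h, if_neg (fun hh => h (hee.mp hh)), if_neg h]
      have hd : ((((e i : Fin m) : ℕ) : ZMod p) + 1) ^ 2 - ((((e j : Fin m) : ℕ) : ZMod p) + 1) ^ 2
          = g ^ 2 * (((((i : ℕ) : ZMod p)) + 1) ^ 2 - ((((j : ℕ) : ZMod p)) + 1) ^ 2) := by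
        rw [show e i = π i from rfl, show e j = π j from rfl, hπsq, hπsq]
        ring
      rw [hd, _root_.mul_inv_rev]
      ring
  rw [fper, fper, ← permanent_submatrix e (1 + u • qm p m), key]

lemma fper_sq (p m : ℕ) [Fact p.Prime] (hm : 2 * m + 1 = p) (w : ZMod p) (hw : w ≠ 0)
    (hsq : IsSquare w) : fper p m w = fper p m 1 := by
  obtain ⟨g, hg⟩ := hsq
  have hg0 : g ≠ 0 := by rintro rfl; simp at hg; exact hw hg
  have h := fper_scale p m hm g hg0 w
  rw [show (g ^ 2)⁻¹ * w = 1 by rw [hg, ← pow_two, inv_mul_cancel₀ (pow_ne_zero _ hg0)]] at h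
  exact h.symm

lemma fper_const (p m : ℕ) [Fact p.Prime] (hm : 2 * m + 1 = p) (hp4 : p % 4 = 3) (w : ZMod p)
    (hw : w ≠ 0) : fper p m w = fper p m 1 := by
  by_cases hsq : IsSquare w
  · exact fper_sq p m hm w hw hsq
  · have hneg : ¬ IsSquare (-1 : ZMod p) := by
      rw [ZMod.exists_sq_eq_neg_one_iff]
      omega
    have h1 : quadraticChar (ZMod p) w = -1 := quadraticChar_neg_one_iff_not_isSquare.mpr hsq
    have h2 : quadraticChar (ZMod p) (-1) = -1 := quadraticChar_neg_one_iff_not_isSquare.mpr hneg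
    have h3 : quadraticChar (ZMod p) (-w) = 1 := by
      rw [show (-w) = (-1) * w by ring, _root_.map_mul, h1, h2]; ring
    have hsq' : IsSquare (-w) :=
      (quadraticChar_one_iff_isSquare (neg_ne_zero.mpr hw)).mp h3
    have := fper_sq p m hm (-w) (neg_ne_zero.mpr hw) hsq'
    rw [← this, fper_neg]

noncomputable def Fpoly (p m : ℕ) : Polynomial (ZMod p) :=
  ∑ σ : Equiv.Perm (Fin m), ∏ i,
    (C ((1 : Matrix (Fin m) (Fin m) (ZMod p)) i (σ i)) + X * C (qm p m i (σ i)))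

lemma Fpoly_eval (p m : ℕ) (u : ZMod p) : (Fpoly p m).eval u = fper p m u := by
  show _ = ∑ σ : Equiv.Perm (Fin m), ∏ i, (1 + u • qm p m) i (σ i)
  rw [Fpoly, eval_finset_sum]
  refine Finset.sum_congr rfl fun σ _ => ?_
  rw [eval_prod]
  refine Finset.prod_congr rfl fun i _ => ?_
  rw [eval_add, eval_C, eval_mul, eval_X, eval_C, Matrix.add_apply, Matrix.smul_apply,
    smul_eq_mul]

lemma Fpoly_natDegree (p m : ℕ) : (Fpoly p m).natDegree ≤ m := by
  refine natDegree_sum_le_of_forall_le _ _ fun σ _ => ?_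
  refine (natDegree_prod_le _ _).trans ?_
  refine (Finset.sum_le_card_nsmul _ _ 1 fun i _ => ?_).trans (by simp)
  refine (natDegree_add_le _ _).trans ?_
  simp only [natDegree_C, max_le_iff]
  refine ⟨Nat.zero_le _, (natDegree_mul_le).trans ?_⟩
  simp [natDegree_X_le]

end Aux

open Polynomial in
/-- For a prime `p ≡ 3 (mod 4)`, `m = (p-1)/2`, and every `u ∈ 𝔽_p`,
`per(I_m + u Q_p) = 1` in `𝔽_p`, where `Q_p` has zero diagonal and entries `(i²-j²)⁻¹`. -/
theorem stmt17 (p : ℕ) [Fact p.Prime] (hp : p % 4 = 3) (u : ZMod p) :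
    permanent
        ((1 : Matrix (Fin ((p - 1) / 2)) (Fin ((p - 1) / 2)) (ZMod p)) +
          u • Matrix.of fun i j : Fin ((p - 1) / 2) =>
            if i = j then (0 : ZMod p)
            else ((((i : ℕ) : ZMod p) + 1) ^ 2 - (((j : ℕ) : ZMod p) + 1) ^ 2)⁻¹)
      = 1 := by
  have hp2 : 2 ≤ p := (Fact.out : p.Prime).two_le
  set m := (p - 1) / 2 with hmdef
  have hm : 2 * m + 1 = p := by omega
  show fper p m u = 1
  have hG : Fpoly p m - C ((Fpoly p m).eval 1) = 0 := by
    apply Polynomial.eq_zero_of_natDegree_lt_card_of_eval_eq_zero' _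
      (Finset.univ.erase (0 : ZMod p))
    · intro w hw
      rw [eval_sub, eval_C, Fpoly_eval, Fpoly_eval,
        fper_const p m hm hp w (Finset.ne_of_mem_erase hw), sub_self]
    · have h1 : (Fpoly p m - C ((Fpoly p m).eval 1)).natDegree ≤ m :=
        (natDegree_sub_le _ _).trans (by simp [Fpoly_natDegree, natDegree_C])
      have hcard : (Finset.univ.erase (0 : ZMod p)).card = p - 1 := by
        rw [Finset.card_erase_of_mem (Finset.mem_univ _), Finset.card_univ, ZMod.card]
      omega
  have hF : Fpoly p m = C ((Fpoly p m).eval 1) := sub_eq_zero.mp hG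
  have h0 : fper p m 0 = 1 := by
    rw [fper, zero_smul, add_zero, permanent_one']
  calc fper p m u = (Fpoly p m).eval u := (Fpoly_eval p m u).symm
    _ = (Fpoly p m).eval 0 := by rw [hF, eval_C, eval_C]
    _ = fper p m 0 := Fpoly_eval p m 0
    _ = 1 := h0
end

section
/- For every odd prime p, ((p-2)!!)^2 ≡ (-1)^{(p-1)/2} · 2^{p-1} · (p-1)! (mod p^2), where (p-2)!! = 1·3·5···(p-2) is the odd double factorial. -/
open Finset

private lemma oddDF : ∀ n : ℕ, Nat.doubleFactorial (2 * n + 1) = ∏ i ∈ range (n + 1), (2 * i + 1)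
  | 0 => rfl
  | n + 1 => by
    rw [show 2 * (n + 1) + 1 = (2 * n + 1) + 2 by ring, Nat.doubleFactorial_add_two,
      prod_range_succ, ← oddDF n]
    ring

private lemma keyProd (m : ℕ) :
    (2 : ℤ) ^ (2 * m) * (Nat.factorial (2 * m) : ℤ) =
      ∏ i ∈ range m, (((2 * m + 1 : ℕ) : ℤ) ^ 2 - (2 * i + 1) ^ 2) := by
  have h1 : (2 : ℤ) ^ (2 * m) * (Nat.factorial (2 * m) : ℤ)
      = ∏ i ∈ range (2 * m), (2 * ((i : ℤ) + 1)) := by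
    have := Nat.doubleFactorial_eq_prod_even (2 * m)
    rw [Nat.doubleFactorial_two_mul] at this
    have := congrArg (fun n : ℕ => (n : ℤ)) this
    push_cast at this
    simpa using this
  have hfst : ∏ i ∈ range m, (2 * ((i : ℤ) + 1))
      = ∏ i ∈ range m, (((2 * m + 1 : ℕ) : ℤ) - (2 * i + 1)) := by
    have hr := Finset.prod_range_reflect
      (fun i => (((2 * m + 1 : ℕ) : ℤ) - (2 * (i : ℤ) + 1))) m
    rw [← hr]
    refine Finset.prod_congr rfl ?_
    intro i hi
    rw [Finset.mem_range] at hi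
    have hc : ((m - 1 - i : ℕ) : ℤ) = (m : ℤ) - 1 - i := by omega
    push_cast [hc]
    ring
  have hsnd : ∀ i ∈ range m, (2 * (((m + i : ℕ) : ℤ) + 1))
      = (((2 * m + 1 : ℕ) : ℤ) + (2 * i + 1)) := by
    intro i hi
    push_cast
    ring
  rw [h1, show 2 * m = m + m from two_mul m, Finset.prod_range_add, hfst,
    Finset.prod_congr rfl hsnd, ← Finset.prod_mul_distrib]
  refine Finset.prod_congr rfl fun i _ => by ring
/-- For every odd prime `p`, `((p-2)!!)² ≡ (-1)^{(p-1)/2} · 2^{p-1} · (p-1)! (mod p²)`. -/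
theorem stmt18 (p : ℕ) [Fact p.Prime] (hodd : p ≠ 2) :
    ((Nat.doubleFactorial (p - 2) : ℤ)) ^ 2 ≡
      (-1) ^ ((p - 1) / 2) * 2 ^ (p - 1) * ((Nat.factorial (p - 1) : ℤ)) [ZMOD (p : ℤ) ^ 2] := by
  have hp : p.Prime := Fact.out
  obtain ⟨m, hm⟩ : Odd p := hp.odd_of_ne_two hodd
  have hm1 : 1 ≤ m := by
    have := hp.two_le
    omega
  have h1 : p - 1 = 2 * m := by omega
  have h2 : (p - 1) / 2 = m := by omega
  have h3 : p - 2 = 2 * (m - 1) + 1 := by omega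
  have hDF : Nat.doubleFactorial (p - 2) = ∏ i ∈ range m, (2 * i + 1) := by
    rw [h3, oddDF (m - 1), show m - 1 + 1 = m by omega]
  have hmodulus : ((p : ℤ)) ^ 2 = ((p ^ 2 : ℕ) : ℤ) := by push_cast; ring
  rw [hDF, h2, h1, hmodulus, ← ZMod.intCast_eq_intCast_iff]
  push_cast
  -- now an equation in ZMod (p ^ 2)
  set R := ZMod (p ^ 2)
  have hp0 : (2 * (m : R) + 1) ^ 2 = 0 := by
    have h0 : (((2 * m + 1 : ℕ)) : R) ^ 2 = 0 := by
      rw [← Nat.cast_pow, show (2 * m + 1) ^ 2 = p ^ 2 by rw [hm], ZMod.natCast_self]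
    push_cast [R] at h0
    exact h0
  have hkey := congrArg (fun z : ℤ => (z : R)) (keyProd m)
  push_cast [R] at hkey
  rw [hp0] at hkey
  have hneg : ∏ i ∈ range m, ((0 : R) - ((2 * i + 1 : R)) ^ 2)
      = (-1) ^ m * ∏ i ∈ range m, ((2 * i + 1 : R)) ^ 2 := by
    calc ∏ i ∈ range m, ((0 : R) - ((2 * i + 1 : R)) ^ 2)
        = ∏ i ∈ range m, ((-1 : R) * ((2 * i + 1 : R)) ^ 2) :=
          Finset.prod_congr rfl fun i _ => by ring
      _ = (∏ _i ∈ range m, (-1 : R)) * ∏ i ∈ range m, ((2 * i + 1 : R)) ^ 2 :=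
          Finset.prod_mul_distrib
      _ = (-1) ^ m * ∏ i ∈ range m, ((2 * i + 1 : R)) ^ 2 := by
          rw [Finset.prod_const, Finset.card_range]
  rw [hneg, Finset.prod_pow] at hkey
  calc (∏ i ∈ range m, ((2 * i : R) + 1)) ^ 2
      = (-1) ^ m * ((-1) ^ m * (∏ i ∈ range m, ((2 * i : R) + 1)) ^ 2) := by
        rw [← mul_assoc, ← pow_add, ← two_mul, pow_mul]
        simp
    _ = (-1) ^ m * (2 ^ (2 * m) * ((Nat.factorial (2 * m) : R))) := by
        rw [hkey]
    _ = (-1) ^ m * 2 ^ (2 * m) * ((Nat.factorial (2 * m) : R)) := by ring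
end
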